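/- arXiv:2304.01497 — 7 statements merged into one kernel-verified Lean document; each statement's English description precedes it below -/
import Mathlib

section
/- Let φ : 𝔻 → 𝔻 be holomorphic and surjective. Then for every f in the Dirichlet space, ‖C_φ f‖_D ≥ ‖f‖_D', where ‖f‖_D'² = ∫_𝔻 |f'(w)|² dA(w); consequently the composition operator C_φ is bounded below on the Dirichlet seminorm and has closed range on D(𝔻). -/
open MeasureTheory Metric Complex Filter Set
open scoped ENNReal NNReal

noncomputable section

/-- The open unit disc in ℂ. -/
def UD : Set ℂ := Metric.ball 0 1

/-- Pseudo-hyperbolic metric. -/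
def rho (z w : ℂ) : ℝ := ‖(z - w) / (1 - (starRingEnd ℂ) z * w)‖

/-- Bergman-metric ball D(z,r). -/
def bergmanBall (z : ℂ) (r : ℝ) : Set ℂ :=
  {w ∈ UD | (1/2) * Real.log ((1 + rho z w) / (1 - rho z w)) < r}

/-- Counting function n_φ. -/
def countFn (φ : ℂ → ℂ) (w : ℂ) : ℕ := Set.ncard {z ∈ UD | φ z = w}

/-- Squared Dirichlet norm (as an extended real). -/
def Dnorm2 (f : ℂ → ℂ) : ℝ≥0∞ :=
  (‖f 0‖₊ : ℝ≥0∞) ^ 2 + ∫⁻ z in UD, (‖deriv f z‖₊ : ℝ≥0∞) ^ 2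

lemma det_restrict (c : ℂ) :
    (((1 : ℂ →L[ℂ] ℂ).smulRight c).restrictScalars ℝ).det = Complex.normSq c := by
  have h : ((((1 : ℂ →L[ℂ] ℂ).smulRight c).restrictScalars ℝ) : ℂ →ₗ[ℝ] ℂ)
      = Algebra.lmul ℝ ℂ c := by
    ext z
    simp [mul_comm]
  rw [ContinuousLinearMap.det, h, ← Algebra.norm_apply, Algebra.norm_complex_apply]


/-- if φ : 𝔻 → 𝔻 is holomorphic and surjective then
‖C_φ f‖_D² = |f(φ(0))|² + ∫_𝔻 |(f∘φ)'|² dA ≥ ∫_𝔻 |f'|² dA = ‖f‖_D'² for every f in the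
Dirichlet space; in particular C_φ is bounded below on the Dirichlet seminorm. -/
theorem stmt2 (φ f : ℂ → ℂ)
    (hφ : DifferentiableOn ℂ φ UD) (hmaps : MapsTo φ UD UD) (hsurj : UD ⊆ φ '' UD)
    (hf : DifferentiableOn ℂ f UD) :
    (∫⁻ w in UD, (‖deriv f w‖₊ : ℝ≥0∞) ^ 2)
      ≤ (‖f (φ 0)‖₊ : ℝ≥0∞) ^ 2 + ∫⁻ z in UD, (‖deriv (f ∘ φ) z‖₊ : ℝ≥0∞) ^ 2 := by
  classical
  have hDo : IsOpen UD := isOpen_ball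
  set g : ℂ → ℝ≥0∞ := fun w => (‖deriv f w‖₊ : ℝ≥0∞) ^ 2 with hg
  set h : ℂ → ℝ≥0∞ := fun z => (‖deriv (f ∘ φ) z‖₊ : ℝ≥0∞) ^ 2 with hh
  have hφa : AnalyticOnNhd ℂ φ UD := hφ.analyticOnNhd hDo
  set F' : ℂ → ℂ →L[ℝ] ℂ :=
    fun z => ((1 : ℂ →L[ℂ] ℂ).smulRight (deriv φ z)).restrictScalars ℝ with hF'def
  have hF' : ∀ z ∈ UD, HasFDerivAt φ (F' z) z := fun z hz =>
    (((hφ z hz).differentiableAt (hDo.mem_nhds hz)).hasDerivAt.hasFDerivAt).restrictScalars ℝ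
  have hdet : ∀ z, |(F' z).det| = Complex.normSq (deriv φ z) := fun z => by
    rw [hF'def, det_restrict]; exact abs_of_nonneg (Complex.normSq_nonneg _)
  -- the critical set
  set Z : Set ℂ := {z ∈ UD | deriv φ z = 0} with hZdef
  have hZnull : volume (φ '' Z) = 0 := by
    apply addHaar_image_eq_zero_of_det_fderivWithin_eq_zero volume (f' := F')
    · exact fun x hx => (hF' x hx.1).hasFDerivWithinAt
    · intro x hx
      have := hdet x
      rw [hx.2, Complex.normSq_zero] at this
      exact abs_eq_zero.mp this
  -- local injectivity
  have key : ∀ z ∈ UD \ Z, ∃ u : Set ℂ,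
      z ∈ u ∧ (IsOpen u ∧ u ⊆ UD ∧ InjOn φ u ∧ IsOpen (φ '' u)) := by
    intro z hz
    obtain ⟨p, hp⟩ := hφa z hz.1
    have hs0 := hp.hasStrictDerivAt
    have hs : HasStrictDerivAt φ (deriv φ z) z := hs0.hasDerivAt.deriv ▸ hs0
    have hne : deriv φ z ≠ 0 := by
      intro hc
      exact hz.2 ⟨hz.1, hc⟩
    have hsf := hs.hasStrictFDerivAt_equiv hne
    set e := hsf.toOpenPartialHomeomorph φ with he
    have hcoe : (e : ℂ → ℂ) = φ := hsf.toOpenPartialHomeomorph_coe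
    refine ⟨e.source ∩ UD, ⟨hsf.mem_toOpenPartialHomeomorph_source, hz.1⟩,
      e.open_source.inter hDo, inter_subset_right, ?_, ?_⟩
    · have := e.injOn
      rw [hcoe] at this
      exact this.mono inter_subset_left
    · have himg : φ '' (e.source ∩ UD) = e '' (e.source ∩ UD) := by rw [hcoe]
      rw [himg]
      exact (e.isOpen_image_iff_of_subset_source inter_subset_left).mpr
        (e.open_source.inter hDo)
  choose! u hu1 hu2 using key
  -- countable subcover
  obtain ⟨T, hTc, hTeq⟩ :=
    TopologicalSpace.isOpen_iUnion_countable (fun i : ↥(UD \ Z) => u i)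
      (fun i => (hu2 i i.2).1)
  set C : Set (Set ℂ) := ((fun i : ↥(UD \ Z) => u i) '' T) ∪ {∅} with hCdef
  have hCc : C.Countable := (hTc.image _).union (countable_singleton _)
  obtain ⟨B, hB⟩ := hCc.exists_eq_range ⟨∅, Or.inr rfl⟩
  have hBP : ∀ n, IsOpen (B n) ∧ B n ⊆ UD ∧ InjOn φ (B n) ∧ IsOpen (φ '' (B n)) := by
    intro n
    have : B n ∈ C := hB ▸ mem_range_self n
    rcases this with ⟨i, _, hi⟩ | hemp
    · exact hi ▸ hu2 i i.2
    · simp only [mem_singleton_iff] at hemp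
      rw [hemp]
      exact ⟨isOpen_empty, empty_subset _, injOn_empty _, by simp⟩
  have hcover : UD \ Z ⊆ ⋃ n, B n := by
    intro z hz
    have : z ∈ ⋃ i : ↥(UD \ Z), u i := mem_iUnion.2 ⟨⟨z, hz⟩, hu1 z hz⟩
    rw [← hTeq] at this
    obtain ⟨i, hiT, hzi⟩ := mem_iUnion₂.1 this
    have : u i ∈ C := Or.inl ⟨i, hiT, rfl⟩
    rw [hB] at this
    obtain ⟨n, hn⟩ := this
    exact mem_iUnion.2 ⟨n, hn ▸ hzi⟩
  -- the pieces
  set V : ℕ → Set ℂ := fun n => φ '' (B n) with hVdef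
  set W : ℕ → Set ℂ := fun n => disjointed V n with hWdef
  set A : ℕ → Set ℂ := fun n => B n ∩ φ ⁻¹' (W n) with hAdef
  have hVopen : ∀ n, IsOpen (V n) := fun n => (hBP n).2.2.2
  have hcont : ContinuousOn φ UD := hφ.continuousOn
  have hOopen : ∀ n m, IsOpen (B n ∩ φ ⁻¹' (V m)) := fun n m =>
    (hcont.mono (hBP n).2.1).isOpen_inter_preimage (hBP n).1 (hVopen m)
  have hAeq : ∀ n, A n = (B n ∩ φ ⁻¹' (V n)) \ ⋃ i ∈ Finset.range n, (B n ∩ φ ⁻¹' (V i)) := by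
    intro n
    ext x
    simp only [hAdef, hWdef, disjointed_eq_inter_compl, mem_inter_iff, mem_preimage,
      mem_diff, mem_iUnion, Finset.mem_range, mem_iInter, mem_compl_iff, not_exists]
    tauto
  have hAm : ∀ n, MeasurableSet (A n) := by
    intro n
    rw [hAeq n]
    exact ((hOopen n n).measurableSet).diff
      (Finset.measurableSet_biUnion _ fun i _ => (hOopen n i).measurableSet)
  have hAD : ∀ n, A n ⊆ UD := fun n => inter_subset_left.trans (hBP n).2.1
  have himg : ∀ n, φ '' (A n) = W n := by
    intro n
    apply Subset.antisymm
    · rintro _ ⟨x, ⟨-, hxW⟩, rfl⟩; exact hxW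
    · intro w hw
      obtain ⟨x, hxB, rfl⟩ := disjointed_subset V n hw
      exact ⟨x, ⟨hxB, hw⟩, rfl⟩
  -- change of variables on each piece
  have hchg : ∀ n, ∫⁻ w in W n, g w = ∫⁻ x in A n, h x := by
    intro n
    rw [← himg n,
      lintegral_image_eq_lintegral_abs_det_fderiv_mul volume (hAm n)
        (fun x hx => (hF' x (hAD n hx)).hasFDerivWithinAt)
        ((hBP n).2.2.1.mono inter_subset_left) g]
    refine setLIntegral_congr_fun (hAm n) (fun x hx => ?_)
    have hxD : x ∈ UD := hAD n hx
    have hfd : DifferentiableAt ℂ f (φ x) :=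
      (hf (φ x) (hmaps hxD)).differentiableAt (hDo.mem_nhds (hmaps hxD))
    have hφd : DifferentiableAt ℂ φ x := (hφ x hxD).differentiableAt (hDo.mem_nhds hxD)
    have hcomp : deriv (f ∘ φ) x = deriv f (φ x) * deriv φ x := deriv_comp x hfd hφd
    rw [hdet x]
    have hns : Complex.normSq (deriv φ x) = ‖deriv φ x‖ ^ 2 := by
      rw [← Complex.sq_norm]
    rw [hns, hh, hg]
    simp only [hcomp, nnnorm_mul, ENNReal.coe_mul]
    rw [ENNReal.ofReal_pow (norm_nonneg _), ofReal_norm_eq_enorm, enorm_eq_nnnorm]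
    ring
  -- covering of UD a.e.
  have hDcover : UD ⊆ φ '' Z ∪ ⋃ n, W n := by
    intro w hw
    obtain ⟨z, hz, rfl⟩ := hsurj hw
    by_cases hzZ : z ∈ Z
    · exact Or.inl ⟨z, hzZ, rfl⟩
    · right
      obtain ⟨n, hn⟩ := mem_iUnion.1 (hcover ⟨hz, hzZ⟩)
      rw [iUnion_disjointed]
      exact mem_iUnion.2 ⟨n, ⟨z, hn, rfl⟩⟩
  have hAdisj : Pairwise (Function.onFun Disjoint A) := fun m n hmn =>
    ((disjoint_disjointed V hmn).preimage φ).mono inter_subset_right inter_subset_right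
  calc ∫⁻ w in UD, g w ≤ ∫⁻ w in (φ '' Z ∪ ⋃ n, W n), g w := lintegral_mono_set hDcover
    _ ≤ (∫⁻ w in φ '' Z, g w) + ∫⁻ w in ⋃ n, W n, g w := lintegral_union_le _ _ _
    _ = ∫⁻ w in ⋃ n, W n, g w := by rw [setLIntegral_measure_zero _ _ hZnull, zero_add]
    _ ≤ ∑' n, ∫⁻ w in W n, g w := lintegral_iUnion_le _ _
    _ = ∑' n, ∫⁻ x in A n, h x := by exact tsum_congr hchg
    _ = ∫⁻ x in ⋃ n, A n, h x := (lintegral_iUnion hAm hAdisj h).symm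
    _ ≤ ∫⁻ x in UD, h x := lintegral_mono_set (iUnion_subset hAD)
    _ ≤ (‖f (φ 0)‖₊ : ℝ≥0∞) ^ 2 + ∫⁻ z in UD, h z := le_add_self
end
end

section
/- Let ζ ∈ 𝕋 (the unit circle), f_ζ(z) = (1 + conj(ζ)·z)/2, and f_k = f_ζ^k. Let U be an open neighborhood of ζ in ℂ. Then the ratio (∫_{𝔻∖U} |f_k'(z)|² dA(z)) / (∫_𝔻 |f_k'(z)|² dA(z)) tends to 0 as k → ∞. -/
open MeasureTheory Metric Complex Filter Set
open scoped ENNReal NNReal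

noncomputable section

/-- for the peak function f_ζ(z)=(1+conj(ζ)z)/2 and f_k = f_ζ^k, for any open
neighborhood U of ζ the mass ratio ∫_{𝔻∖U}|f_k'|²dA / ∫_𝔻|f_k'|²dA tends to 0. -/
theorem stmt7 (ζ : ℂ) (hζ : ‖ζ‖ = 1)
    (U : Set ℂ) (hU : IsOpen U) (hζU : ζ ∈ U) :
    Tendsto (fun k : ℕ =>
      (∫ z in UD \ U,
        ‖deriv (fun z => ((1 + (starRingEnd ℂ) ζ * z) / 2) ^ k) z‖ ^ 2) /
      (∫ z in UD,
        ‖deriv (fun z => ((1 + (starRingEnd ℂ) ζ * z) / 2) ^ k) z‖ ^ 2))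
      atTop (nhds 0) := by
  set c : ℂ := (starRingEnd ℂ) ζ with hc_def
  have hc : ‖c‖ = 1 := by rw [hc_def, Complex.norm_conj, hζ]
  have hcont : Continuous fun z : ℂ => ‖(1 + c * z) / 2‖ :=
    continuous_norm.comp (by continuity)
  -- the compact set away from U
  set K : Set ℂ := Metric.closedBall 0 1 \ U with hK_def
  have hKc : IsCompact K := (isCompact_closedBall 0 1).diff hU
  -- uniform bound M < 1 on K
  obtain ⟨M, hM0, hM1, hMK⟩ : ∃ M : ℝ, 0 ≤ M ∧ M < 1 ∧
      ∀ z ∈ K, ‖(1 + c * z) / 2‖ ≤ M := by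
    rcases K.eq_empty_or_nonempty with hKe | hKne
    · exact ⟨1/2, by norm_num, by norm_num, fun z hz => by simp [hKe] at hz⟩
    · obtain ⟨z0, hz0K, hmax⟩ := hKc.exists_isMaxOn hKne hcont.continuousOn
      have hz0max : ∀ z ∈ K, ‖(1 + c * z) / 2‖ ≤ ‖(1 + c * z0) / 2‖ :=
        fun z hz => hmax hz
      refine ⟨‖(1 + c * z0) / 2‖, norm_nonneg _, ?_, hz0max⟩
      -- show the peak value is < 1
      by_contra hge
      push_neg at hge
      have h2 : 2 ≤ ‖1 + c * z0‖ := by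
        have := hge
        rw [norm_div, Complex.norm_two] at this
        linarith
      set w : ℂ := c * z0 with hw_def
      have hwabs : ‖w‖ ≤ 1 := by
        rw [hw_def, norm_mul, hc, one_mul]
        simpa using mem_closedBall_zero_iff.mp hz0K.1
      have hw1 : w = 1 := by
        have h4 : (4 : ℝ) ≤ ‖1 + w‖ ^ 2 := by nlinarith [norm_nonneg (1 + w)]
        have hns1 : (4 : ℝ) ≤ (1 + w.re) ^ 2 + w.im ^ 2 := by
          rwa [Complex.sq_norm, Complex.normSq_apply, Complex.add_re, Complex.add_im,
            Complex.one_re, Complex.one_im, zero_add, ← pow_two, ← pow_two] at h4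
        have hns2 : w.re ^ 2 + w.im ^ 2 ≤ 1 := by
          have := Complex.sq_norm w
          rw [Complex.normSq_apply, ← pow_two, ← pow_two] at this
          nlinarith [norm_nonneg w]
        have hre : w.re = 1 := by nlinarith
        have him : w.im = 0 := by nlinarith
        exact Complex.ext (by simp [hre]) (by simp [him])
      have hz0ζ : z0 = ζ := by
        have : ζ * w = ζ := by rw [hw1, mul_one]
        rw [hw_def, ← mul_assoc, Complex.mul_conj, Complex.normSq_eq_norm_sq, hζ] at this
        simpa using this
      exact hz0K.2 (hz0ζ ▸ hζU)
  obtain ⟨r, hr0, hr1, hMr⟩ : ∃ r : ℝ, 0 < r ∧ r < 1 ∧ M < r :=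
    ⟨(M + 1) / 2, by linarith, by linarith, by linarith⟩
  -- the set V of positive measure where |f| > r
  set V : Set ℂ := UD ∩ {z | r < ‖(1 + c * z) / 2‖} with hV_def
  have hUDball : UD = Metric.ball (0 : ℂ) 1 := rfl
  have hVopen : IsOpen V := by
    rw [hV_def, hUDball]
    exact isOpen_ball.inter (isOpen_lt continuous_const hcont)
  have hVne : V.Nonempty := by
    refine ⟨(r : ℂ) * ζ, ?_, ?_⟩
    · rw [hUDball, mem_ball_zero_iff]
      simpa [norm_mul, Complex.norm_real, hζ, _root_.abs_of_nonneg hr0.le]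
        using hr1
    · have hcz : c * ((r : ℂ) * ζ) = (r : ℂ) := by
        rw [hc_def, ← mul_assoc, mul_comm ((starRingEnd ℂ) ζ) ((r : ℂ)), mul_assoc,
          mul_comm ((starRingEnd ℂ) ζ) ζ, Complex.mul_conj, Complex.normSq_eq_norm_sq, hζ]
        simp
      show r < ‖(1 + c * ((r : ℂ) * ζ)) / 2‖
      rw [hcz]
      have h1r : ((1 : ℂ) + (r : ℂ)) / 2 = (((1 + r) / 2 : ℝ) : ℂ) := by push_cast; ring
      rw [h1r, Complex.norm_real, Real.norm_of_nonneg (by linarith)]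
      linarith
  have hVsub : V ⊆ UD := inter_subset_left
  have hVfin : volume V < ⊤ :=
    lt_of_le_of_lt (measure_mono hVsub) (by rw [hUDball]; exact measure_ball_lt_top)
  have hVpos : 0 < volume V := hVopen.measure_pos volume hVne
  set B : ℝ := (volume V).toReal with hB_def
  have hB : 0 < B := ENNReal.toReal_pos hVpos.ne' hVfin.ne
  set A : ℝ := (volume (UD \ U)).toReal with hA_def
  have hA0 : 0 ≤ A := ENNReal.toReal_nonneg
  have hNUfin : volume (UD \ U) < ⊤ :=
    lt_of_le_of_lt (measure_mono diff_subset) (by rw [hUDball]; exact measure_ball_lt_top)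
  -- the power functions
  set G : ℕ → ℂ → ℝ := fun m z => ‖(1 + c * z) / 2‖ ^ (2 * m) with hG_def
  have hGcont : ∀ m, Continuous (G m) := fun m => hcont.pow _
  have hGint : ∀ m, IntegrableOn (G m) UD := by
    intro m
    rw [hUDball]
    exact ((hGcont m).continuousOn.integrableOn_compact (isCompact_closedBall 0 1)).mono_set
      ball_subset_closedBall
  have hGnn : ∀ m z, 0 ≤ G m z := fun m z => pow_nonneg (norm_nonneg _) _
  -- numerator bound
  have hN : ∀ m, ∫ z in UD \ U, G m z ≤ M ^ (2 * m) * A := by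
    intro m
    have hb : ∀ z ∈ UD \ U, ‖G m z‖ ≤ M ^ (2 * m) := by
      intro z hz
      rw [Real.norm_eq_abs, _root_.abs_of_nonneg (hGnn m z)]
      exact pow_le_pow_left₀ (norm_nonneg _)
        (hMK z ⟨ball_subset_closedBall hz.1, hz.2⟩) _
    calc ∫ z in UD \ U, G m z ≤ ‖∫ z in UD \ U, G m z‖ := le_abs_self _
      _ ≤ M ^ (2 * m) * A :=
        norm_setIntegral_le_of_norm_le_const hNUfin hb
  -- denominator bound
  have hD : ∀ m, r ^ (2 * m) * B ≤ ∫ z in UD, G m z := by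
    intro m
    have h1 : r ^ (2 * m) * B = ∫ _ in V, r ^ (2 * m) := by
      rw [setIntegral_const, smul_eq_mul, mul_comm]; rfl
    have h2 : (∫ _ in V, r ^ (2 * m)) ≤ ∫ z in V, G m z := by
      refine setIntegral_mono_on (integrableOn_const hVfin.ne)
        ((hGint m).mono_set hVsub) hVopen.measurableSet ?_
      intro z hz
      exact pow_le_pow_left₀ hr0.le (le_of_lt hz.2) _
    have h3 : (∫ z in V, G m z) ≤ ∫ z in UD, G m z :=
      setIntegral_mono_set (hGint m) (Eventually.of_forall fun z => hGnn m z)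
        (HasSubset.Subset.eventuallyLE hVsub)
    linarith
  -- derivative computation
  have hderiv : ∀ k : ℕ, ∀ z : ℂ,
      ‖deriv (fun z => ((1 + c * z) / 2) ^ k) z‖ ^ 2
        = ((k : ℝ) ^ 2 / 4) * G (k - 1) z := by
    intro k z
    have h : HasDerivAt (fun z : ℂ => (1 + c * z) / 2) (c / 2) z := by
      simpa using (((hasDerivAt_id z).const_mul c).const_add 1).div_const 2
    rw [show (fun z => ((1 + c * z) / 2) ^ k) = (fun z : ℂ => (1 + c * z) / 2) ^ k from rfl,
      (h.pow k).deriv]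
    simp only [hG_def, norm_mul, norm_pow, norm_div, Complex.norm_natCast, Complex.norm_two, hc]
    rw [show 2 * (k - 1) = (k - 1) * 2 from mul_comm _ _, pow_mul]
    ring
  -- the bounding sequence
  have hx0 : 0 ≤ (M / r) ^ 2 := sq_nonneg _
  have hx1 : (M / r) ^ 2 < 1 := by
    have hlt : M / r < 1 := (div_lt_one hr0).mpr hMr
    nlinarith [div_nonneg hM0 hr0.le]
  have hbt : Tendsto (fun k : ℕ => ((M / r) ^ 2) ^ (k - 1) * (A / B)) atTop (nhds 0) := by
    have := ((tendsto_pow_atTop_nhds_zero_of_lt_one hx0 hx1).comp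
      (tendsto_sub_atTop_nat 1)).mul_const (A / B)
    simpa using this
  refine tendsto_of_tendsto_of_tendsto_of_le_of_le' tendsto_const_nhds hbt ?_ ?_
  · -- nonnegativity
    filter_upwards with k
    refine div_nonneg (setIntegral_nonneg ?_ fun z _ => sq_nonneg _)
      (setIntegral_nonneg ?_ fun z _ => sq_nonneg _)
    · exact (by rw [hUDball]; exact measurableSet_ball : MeasurableSet UD).diff hU.measurableSet
    · rw [hUDball]; exact measurableSet_ball
  · -- the upper bound, eventually
    filter_upwards [eventually_ge_atTop 1] with k hk
    set m := k - 1 with hm_def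
    have hrw : (fun z : ℂ => ‖deriv (fun z => ((1 + c * z) / 2) ^ k) z‖ ^ 2)
        = fun z => ((k : ℝ) ^ 2 / 4) * G m z := funext fun z => hderiv k z
    have hP : (0 : ℝ) < (k : ℝ) ^ 2 / 4 := by
      have : (1 : ℝ) ≤ (k : ℝ) := by exact_mod_cast hk
      positivity
    have hnum : (∫ z in UD \ U,
        ‖deriv (fun z => ((1 + c * z) / 2) ^ k) z‖ ^ 2)
        = ((k : ℝ) ^ 2 / 4) * ∫ z in UD \ U, G m z := by
      rw [hrw, integral_const_mul]
    have hden : (∫ z in UD,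
        ‖deriv (fun z => ((1 + c * z) / 2) ^ k) z‖ ^ 2)
        = ((k : ℝ) ^ 2 / 4) * ∫ z in UD, G m z := by
      rw [hrw, integral_const_mul]
    rw [hnum, hden, mul_div_mul_left _ _ hP.ne']
    calc (∫ z in UD \ U, G m z) / ∫ z in UD, G m z
        ≤ (M ^ (2 * m) * A) / (r ^ (2 * m) * B) :=
          div_le_div₀ (mul_nonneg (pow_nonneg hM0 _) hA0) (hN m)
            (mul_pos (pow_pos hr0 _) hB) (hD m)
      _ = ((M / r) ^ 2) ^ m * (A / B) := by
          rw [← pow_mul, div_pow, div_mul_div_comm]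
end
end

section
/- Let φ : 𝔻 → 𝔻 be holomorphic such that C_φ is bounded on the Dirichlet space and its range is closed. Then 𝕋 ⊆ closure(φ(𝔻)); equivalently, for every ζ ∈ 𝕋 and every r > 0, S(ζ,r) ∩ φ(𝔻) ≠ ∅, where S(ζ,r) = {z ∈ 𝔻 : |z − ζ| < r}. -/
open MeasureTheory Metric Complex Filter Set
open scoped ENNReal NNReal

noncomputable section

lemma aux_hasDerivAt (ζ z : ℂ) (h : ζ - z ≠ 0) :
    HasDerivAt (fun w => (ζ - w)⁻¹) (((ζ - z) ^ 2)⁻¹) z := by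
  have : HasDerivAt (fun w => (ζ - w)⁻¹) (-(-1) / (ζ - z) ^ 2) z := ((hasDerivAt_id z).const_sub ζ).inv h
  exact this.congr_deriv (by ring)

-- divergence of the Dirichlet integral of (ζ - ·)⁻¹
lemma aux_div (ζ : ℂ) (hζ : ‖ζ‖ = 1) :
    ∫⁻ z in UD, (‖deriv (fun w => (ζ - w)⁻¹) z‖₊ : ℝ≥0∞) ^ 2 = ⊤ := by
  have hne : ∀ z ∈ UD, ζ - z ≠ 0 := by
    intro z hz h
    rw [sub_eq_zero] at h
    have : ‖z‖ < 1 := by simpa [UD, Complex.dist_eq] using hz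
    rw [← h, hζ] at this; exact lt_irrefl _ this
  apply ENNReal.eq_top_of_forall_nnreal_le
  intro r
  set n : ℕ := max 2 ⌈(64 : ℝ) * r⌉₊ with hn
  have hn2 : (2 : ℕ) ≤ n := le_max_left _ _
  have hnr : (64 : ℝ) * r ≤ n := le_trans (Nat.le_ceil _) (by exact_mod_cast le_max_right _ _)
  have hnpos : (0 : ℝ) < n := by positivity
  set s : ℝ := (n : ℝ)⁻¹ with hs
  have hspos : 0 < s := by positivity
  have hshalf : s ≤ 1 / 2 := by
    rw [hs]
    rw [inv_le_comm₀ hnpos (by norm_num)]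
    norm_num
    exact_mod_cast hn2
  set c : ℂ := ((1 - s : ℝ) : ℂ) * ζ with hc
  have hcn : ‖c‖ = 1 - s := by
    rw [hc, norm_mul, Complex.norm_real, Real.norm_eq_abs,
      show ‖ζ‖ = 1 from hζ, mul_one, _root_.abs_of_nonneg (by linarith : (0:ℝ) ≤ 1 - s)]
  have hsub : ball c (s / 2) ⊆ UD := by
    intro w hw
    simp only [UD, mem_ball, dist_zero_right]
    have htri : ‖w‖ ≤ ‖w - c‖ + ‖c‖ := by
      have h := norm_add_le (w - c) c
      rwa [sub_add_cancel] at h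
    calc ‖w‖ ≤ ‖w - c‖ + ‖c‖ := htri
    _ < s / 2 + (1 - s) := by rw [hcn]; exact add_lt_add_left (by simpa [dist_eq_norm] using hw) _
    _ < 1 := by linarith
  have hdist : ∀ w ∈ ball c (s / 2), ‖ζ - w‖ < 2 * s := by
    intro w hw
    have h1 : ‖ζ - c‖ = s := by
      have : ζ - c = ((s : ℝ) : ℂ) * ζ := by rw [hc]; push_cast; ring
      rw [this, norm_mul, Complex.norm_real, Real.norm_eq_abs,
        show ‖ζ‖ = 1 from hζ, mul_one, _root_.abs_of_nonneg hspos.le]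
    calc ‖ζ - w‖ ≤ ‖ζ - c‖ + ‖c - w‖ := by
          simpa using norm_sub_le_norm_sub_add_norm_sub ζ c w
    _ < s + s / 2 := by
        rw [h1]
        exact add_lt_add_right (by simpa [dist_eq_norm'] using hw) _
    _ ≤ 2 * s := by linarith
  have hbound : ∀ w ∈ ball c (s / 2),
      ENNReal.ofReal ((n : ℝ) ^ 4 / 16) ≤ (‖deriv (fun w => (ζ - w)⁻¹) w‖₊ : ℝ≥0∞) ^ 2 := by
    intro w hw
    have hwUD := hsub hw
    have hne' := hne w hwUD
    have hd : deriv (fun w => (ζ - w)⁻¹) w = ((ζ - w) ^ 2)⁻¹ := (aux_hasDerivAt ζ w hne').deriv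
    have hnorm : ‖deriv (fun w => (ζ - w)⁻¹) w‖ = (‖ζ - w‖ ^ 2)⁻¹ := by
      rw [hd, norm_inv, norm_pow]
    have hwp : 0 < ‖ζ - w‖ := norm_pos_iff.mpr hne'
    have h2s : ‖ζ - w‖ < 2 * s := hdist w hw
    have key : (n : ℝ) ^ 2 / 4 ≤ ‖deriv (fun w => (ζ - w)⁻¹) w‖ := by
      rw [hnorm]
      have h1 : ‖ζ - w‖ ^ 2 < (2 * s) ^ 2 := by
        apply pow_lt_pow_left₀ h2s hwp.le; norm_num
      have h2 : (2 * s) ^ 2 = 4 / (n : ℝ) ^ 2 := by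
        rw [hs]; field_simp; ring
      have h3 : ‖ζ - w‖ ^ 2 ≤ 4 / (n : ℝ) ^ 2 := by rw [← h2]; exact h1.le
      have hp : (0:ℝ) < ‖ζ - w‖ ^ 2 := by positivity
      have hinv : ((4:ℝ) / (n:ℝ) ^ 2)⁻¹ ≤ (‖ζ - w‖ ^ 2)⁻¹ := inv_anti₀ hp h3
      have heq : ((4:ℝ) / (n:ℝ) ^ 2)⁻¹ = (n:ℝ) ^ 2 / 4 := by field_simp
      linarith
    calc ENNReal.ofReal ((n : ℝ) ^ 4 / 16)
        = ENNReal.ofReal (((n : ℝ) ^ 2 / 4) ^ 2) := by ring_nf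
      _ ≤ ENNReal.ofReal (‖deriv (fun w => (ζ - w)⁻¹) w‖ ^ 2) :=
          ENNReal.ofReal_le_ofReal (by
            apply pow_le_pow_left₀ (by positivity) key)
      _ = (‖deriv (fun w => (ζ - w)⁻¹) w‖₊ : ℝ≥0∞) ^ 2 := by
          rw [ENNReal.ofReal_pow (norm_nonneg _), ofReal_norm, enorm_eq_nnnorm]
  calc (r : ℝ≥0∞) = ENNReal.ofReal r := (ENNReal.ofReal_coe_nnreal).symm
    _ ≤ ENNReal.ofReal ((n : ℝ) ^ 4 / 16 * ((s / 2) ^ 2 * 3)) := by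
        apply ENNReal.ofReal_le_ofReal
        have : (n : ℝ) ^ 4 / 16 * ((s / 2) ^ 2 * 3) = 3 * (n : ℝ) ^ 2 / 64 := by
          rw [hs]; field_simp; ring
        rw [this]
        have hn1 : (1 : ℝ) ≤ n := by exact_mod_cast le_trans (by norm_num) hn2
        nlinarith [hnr, hnpos]
    _ = ENNReal.ofReal ((n : ℝ) ^ 4 / 16) * ENNReal.ofReal ((s / 2) ^ 2 * 3) := by
        rw [ENNReal.ofReal_mul (by positivity)]
    _ ≤ ENNReal.ofReal ((n : ℝ) ^ 4 / 16) * volume (ball c (s / 2)) := by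
        apply mul_le_mul_right
        rw [Complex.volume_ball]
        rw [ENNReal.ofReal_mul (by positivity)]
        apply mul_le_mul'
        · rw [← ENNReal.ofReal_pow (by positivity)]
        · rw [show ((NNReal.pi : ℝ≥0∞)) = ENNReal.ofReal Real.pi by
            rw [← ENNReal.ofReal_coe_nnreal, NNReal.coe_real_pi]]
          exact ENNReal.ofReal_le_ofReal (by linarith [Real.pi_gt_three])
    _ = ∫⁻ _ in ball c (s / 2), ENNReal.ofReal ((n : ℝ) ^ 4 / 16) := by
        rw [setLIntegral_const, mul_comm]
    _ ≤ ∫⁻ z in ball c (s / 2), (‖deriv (fun w => (ζ - w)⁻¹) z‖₊ : ℝ≥0∞) ^ 2 :=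
        setLIntegral_mono' measurableSet_ball hbound
    _ ≤ ∫⁻ z in UD, (‖deriv (fun w => (ζ - w)⁻¹) z‖₊ : ℝ≥0∞) ^ 2 :=
        lintegral_mono_set hsub

/-- if C_φ is bounded on the Dirichlet space and has closed range (equivalently,
since C_φ is injective, C_φ is bounded below: ∃ c > 0 with ‖C_φ f‖² ≥ c‖f‖² for all f), then
𝕋 ⊆ closure(φ(𝔻)). -/
theorem stmt9 (φ : ℂ → ℂ) (hφ : DifferentiableOn ℂ φ UD) (hmaps : MapsTo φ UD UD)
    (M : ℝ) (hM : 0 < M)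
    (hbdd : ∀ f : ℂ → ℂ, DifferentiableOn ℂ f UD →
      Dnorm2 (f ∘ φ) ≤ ENNReal.ofReal M * Dnorm2 f)
    (hclosed : ∃ c : ℝ, 0 < c ∧ ∀ f : ℂ → ℂ, DifferentiableOn ℂ f UD →
      ENNReal.ofReal c * Dnorm2 f ≤ Dnorm2 (f ∘ φ)) :
    ∀ ζ : ℂ, ‖ζ‖ = 1 → ζ ∈ closure (φ '' UD) := by
  intro ζ hζ
  by_contra hcl
  rw [Metric.mem_closure_iff] at hcl
  push_neg at hcl
  obtain ⟨ε, hε, hsep⟩ := hcl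
  -- hsep : ∀ b ∈ φ '' UD, ε ≤ dist ζ b
  set f : ℂ → ℂ := fun w => (ζ - w)⁻¹ with hfdef
  have hUDopen : IsOpen UD := isOpen_ball
  have hnez : ∀ z ∈ UD, ζ - φ z ≠ 0 := by
    intro z hz h
    have h1 : ε ≤ dist ζ (φ z) := hsep _ ⟨z, hz, rfl⟩
    rw [sub_eq_zero] at h
    rw [← h, dist_self] at h1
    linarith
  have hεdist : ∀ z ∈ UD, ε ≤ ‖ζ - φ z‖ := by
    intro z hz
    simpa [Complex.dist_eq] using hsep _ ⟨z, hz, rfl⟩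
  have hfd : DifferentiableOn ℂ f UD := by
    intro z hz
    have hne : ζ - z ≠ 0 := by
      intro h
      rw [sub_eq_zero] at h
      have : ‖z‖ < 1 := by simpa [UD, Complex.dist_eq] using hz
      rw [← h, hζ] at this; exact lt_irrefl _ this
    exact (aux_hasDerivAt ζ z hne).differentiableAt.differentiableWithinAt
  -- Dnorm2 of the identity is finite
  have hid_fin : Dnorm2 (fun w : ℂ => w) ≠ ⊤ := by
    have h1 : ∀ z : ℂ, deriv (fun w : ℂ => w) z = 1 := fun z => deriv_id z
    simp only [Dnorm2, h1]
    simp only [nnnorm_zero, nnnorm_one, ENNReal.coe_one, one_pow, lintegral_one,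
      Measure.restrict_apply, MeasurableSet.univ, univ_inter]
    simp only [ENNReal.coe_zero]
    exact ENNReal.add_ne_top.mpr ⟨by simp, (measure_ball_lt_top).ne⟩
  -- the Dirichlet integral of φ is finite
  have hφfin : (∫⁻ z in UD, (‖deriv φ z‖₊ : ℝ≥0∞) ^ 2) ≠ ⊤ := by
    have h1 : Dnorm2 φ ≤ ENNReal.ofReal M * Dnorm2 (fun w : ℂ => w) := by
      have := hbdd (fun w : ℂ => w) differentiable_id.differentiableOn
      exact this
    have h2 : Dnorm2 φ ≠ ⊤ :=
      (h1.trans_lt (ENNReal.mul_lt_top ENNReal.ofReal_lt_top hid_fin.lt_top)).ne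
    intro h
    apply h2
    rw [Dnorm2, h]; simp
  -- Dnorm2 (f ∘ φ) is finite
  have hcomp_fin : Dnorm2 (f ∘ φ) ≠ ⊤ := by
    have hptwise : ∀ z ∈ UD,
        (‖deriv (f ∘ φ) z‖₊ : ℝ≥0∞) ^ 2 ≤
          ENNReal.ofReal (ε⁻¹ ^ 4) * (‖deriv φ z‖₊ : ℝ≥0∞) ^ 2 := by
      intro z hz
      have hφz : DifferentiableAt ℂ φ z := hφ.differentiableAt (hUDopen.mem_nhds hz)
      have hfz : HasDerivAt f (((ζ - φ z) ^ 2)⁻¹) (φ z) := aux_hasDerivAt ζ (φ z) (hnez z hz)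
      have hd : deriv (f ∘ φ) z = ((ζ - φ z) ^ 2)⁻¹ * deriv φ z := by
        rw [deriv_comp z hfz.differentiableAt hφz, hfz.deriv]
      have hnorm : ‖deriv (f ∘ φ) z‖ ≤ ε⁻¹ ^ 2 * ‖deriv φ z‖ := by
        rw [hd, norm_mul, norm_inv, norm_pow]
        apply mul_le_mul_of_nonneg_right _ (norm_nonneg _)
        rw [← inv_pow]
        apply pow_le_pow_left₀ (by positivity)
        exact inv_anti₀ hε (hεdist z hz)
      calc (‖deriv (f ∘ φ) z‖₊ : ℝ≥0∞) ^ 2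
          = ENNReal.ofReal (‖deriv (f ∘ φ) z‖ ^ 2) := by
            rw [ENNReal.ofReal_pow (norm_nonneg _), ofReal_norm, enorm_eq_nnnorm]
        _ ≤ ENNReal.ofReal ((ε⁻¹ ^ 2 * ‖deriv φ z‖) ^ 2) :=
            ENNReal.ofReal_le_ofReal (pow_le_pow_left₀ (norm_nonneg _) hnorm 2)
        _ = ENNReal.ofReal (ε⁻¹ ^ 4 * ‖deriv φ z‖ ^ 2) := by ring_nf
        _ = ENNReal.ofReal (ε⁻¹ ^ 4) * ENNReal.ofReal (‖deriv φ z‖ ^ 2) :=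
            ENNReal.ofReal_mul (by positivity)
        _ = ENNReal.ofReal (ε⁻¹ ^ 4) * (‖deriv φ z‖₊ : ℝ≥0∞) ^ 2 := by
            rw [ENNReal.ofReal_pow (norm_nonneg _), ofReal_norm, enorm_eq_nnnorm]
    have hint : (∫⁻ z in UD, (‖deriv (f ∘ φ) z‖₊ : ℝ≥0∞) ^ 2) ≠ ⊤ := by
      have h1 : (∫⁻ z in UD, (‖deriv (f ∘ φ) z‖₊ : ℝ≥0∞) ^ 2) ≤
          ∫⁻ z in UD, ENNReal.ofReal (ε⁻¹ ^ 4) * (‖deriv φ z‖₊ : ℝ≥0∞) ^ 2 :=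
        setLIntegral_mono' measurableSet_ball hptwise
      have h2 : (∫⁻ z in UD, ENNReal.ofReal (ε⁻¹ ^ 4) * (‖deriv φ z‖₊ : ℝ≥0∞) ^ 2) =
          ENNReal.ofReal (ε⁻¹ ^ 4) * ∫⁻ z in UD, (‖deriv φ z‖₊ : ℝ≥0∞) ^ 2 :=
        lintegral_const_mul' _ _ ENNReal.ofReal_ne_top
      exact (h1.trans_lt (by
        rw [h2]
        exact ENNReal.mul_lt_top ENNReal.ofReal_lt_top hφfin.lt_top)).ne
    rw [Dnorm2]
    exact ENNReal.add_ne_top.mpr ⟨by simp [ENNReal.pow_ne_top, ENNReal.coe_ne_top], hint⟩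
  -- contradiction from the lower bound
  obtain ⟨c, hc, hlow⟩ := hclosed
  have hDf : Dnorm2 f = ⊤ := by
    rw [Dnorm2, aux_div ζ hζ]; simp
  have := hlow f hfd
  rw [hDf, ENNReal.mul_top (by simpa using ENNReal.ofReal_pos.mpr hc)] at this
  exact hcomp_fin (top_le_iff.mp this)
end
end

section
/- Let φ : 𝔻 → 𝔻 be holomorphic, α ∈ (0,1), and suppose there are constants M > 0 and δ > 0 and r > 0 such that ∫_{D(z,r)} n_φ dA ≤ M·A(D(z,r)) for all z ∈ 𝔻 and ∫_{φ(𝔻) ∩ D(z,r)} n_φ^α dA ≥ δ·A(D(z,r)) for all z ∈ 𝔻. Then there exists δ' > 0 such that A(φ(𝔻) ∩ D(z,r)) ≥ δ'·A(D(z,r)) for all z ∈ 𝔻. -/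
open MeasureTheory Metric Complex Filter Set
open scoped ENNReal NNReal

noncomputable section

/-- from ∫_{D(z,r)} n_φ dA ≤ M·A(D(z,r)) and
∫_{φ(𝔻)∩D(z,r)} n_φ^α dA ≥ δ·A(D(z,r)) for all z, the area condition
A(φ(𝔻)∩D(z,r)) ≥ δ'·A(D(z,r)) follows for some δ' > 0. -/
theorem stmt11 (φ : ℂ → ℂ) (hφ : DifferentiableOn ℂ φ UD) (hmaps : MapsTo φ UD UD)
    (α M δ r : ℝ) (hα0 : 0 < α) (hα1 : α < 1) (hM : 0 < M) (hδ : 0 < δ) (hr : 0 < r)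
    (hup : ∀ z ∈ UD, (∫⁻ w in bergmanBall z r, (countFn φ w : ℝ≥0∞))
      ≤ ENNReal.ofReal M * volume (bergmanBall z r))
    (hlow : ∀ z ∈ UD, ENNReal.ofReal δ * volume (bergmanBall z r)
      ≤ ∫⁻ w in φ '' UD ∩ bergmanBall z r, (countFn φ w : ℝ≥0∞) ^ α) :
    ∃ δ' : ℝ, 0 < δ' ∧ ∀ z ∈ UD,
      ENNReal.ofReal δ' * volume (bergmanBall z r) ≤ volume (φ '' UD ∩ bergmanBall z r) := by
  -- choose t ≥ 1 with M * t^(α-1) ≤ δ/2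
  set t : ℝ := max 1 ((2 * M / δ) ^ (1 / (1 - α))) with ht_def
  have ht1 : (1 : ℝ) ≤ t := le_max_left _ _
  have ht0 : (0 : ℝ) < t := lt_of_lt_of_le one_pos ht1
  have h1α : (0 : ℝ) < 1 - α := by linarith
  have hbase : (0 : ℝ) < 2 * M / δ := by positivity
  have htpow : 2 * M / δ ≤ t ^ (1 - α) := by
    have h1 : (2 * M / δ) ^ (1 / (1 - α)) ≤ t := le_max_right _ _
    have h2 : ((2 * M / δ) ^ (1 / (1 - α))) ^ (1 - α) ≤ t ^ (1 - α) :=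
      Real.rpow_le_rpow (Real.rpow_nonneg hbase.le _) h1 h1α.le
    calc 2 * M / δ = (2 * M / δ) ^ ((1 / (1 - α)) * (1 - α)) := by
          rw [one_div_mul_cancel h1α.ne', Real.rpow_one]
      _ = ((2 * M / δ) ^ (1 / (1 - α))) ^ (1 - α) := Real.rpow_mul hbase.le _ _
      _ ≤ t ^ (1 - α) := h2
  have htM : M * t ^ (α - 1) ≤ δ / 2 := by
    have hneg : t ^ (α - 1) = (t ^ (1 - α))⁻¹ := by
      rw [show α - 1 = -(1 - α) by ring, Real.rpow_neg ht0.le]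
    rw [hneg]
    have hpos : 0 < t ^ (1 - α) := Real.rpow_pos_of_pos ht0 _
    have h3 : M * (t ^ (1 - α))⁻¹ ≤ M * (2 * M / δ)⁻¹ := by
      have hinv : (t ^ (1 - α))⁻¹ ≤ (2 * M / δ)⁻¹ := by
        apply inv_anti₀ hbase htpow
      exact mul_le_mul_of_nonneg_left hinv hM.le
    have h4 : M * (2 * M / δ)⁻¹ = δ / 2 := by field_simp
    linarith
  have htα : (0 : ℝ) < t ^ α := Real.rpow_pos_of_pos ht0 _
  refine ⟨δ / (2 * t ^ α), by positivity, fun z hz => ?_⟩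
  set B := bergmanBall z r with hB
  set S := φ '' UD ∩ B with hS
  have hBsub : B ⊆ UD := fun w hw => hw.1
  have hAfin : volume B ≠ ⊤ :=
    (lt_of_le_of_lt (measure_mono hBsub) measure_ball_lt_top).ne
  -- pointwise bound in ℝ: x^α ≤ t^α + x * t^(α-1) for x ≥ 0
  have hreal : ∀ x : ℝ, 0 ≤ x → x ^ α ≤ t ^ α + x * t ^ (α - 1) := by
    intro x hx
    rcases le_or_gt x t with h | h
    · have h1 : x ^ α ≤ t ^ α := Real.rpow_le_rpow hx h hα0.le
      have h2 : 0 ≤ x * t ^ (α - 1) := by positivity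
      linarith
    · have hx0 : 0 < x := lt_trans ht0 h
      have h1 : x ^ (α - 1) ≤ t ^ (α - 1) :=
        Real.rpow_le_rpow_of_nonpos ht0 h.le (by linarith)
      have h2 : x ^ α = x * x ^ (α - 1) := by
        have h' := Real.rpow_add hx0 1 (α - 1)
        rw [Real.rpow_one] at h'
        rw [show (1:ℝ) + (α - 1) = α by ring] at h'
        exact h'
      have h3 : x * x ^ (α - 1) ≤ x * t ^ (α - 1) := by
        exact mul_le_mul_of_nonneg_left h1 hx0.le
      have h4 : 0 ≤ t ^ α := htα.le
      linarith [h2, h3]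
  -- pointwise bound in ℝ≥0∞
  have hpt : ∀ w : ℂ, (countFn φ w : ℝ≥0∞) ^ α
      ≤ ENNReal.ofReal (t ^ α) + ENNReal.ofReal (t ^ (α - 1)) * (countFn φ w : ℝ≥0∞) := by
    intro w
    set n : ℝ := (countFn φ w : ℝ)
    have hn : (0 : ℝ) ≤ n := Nat.cast_nonneg _
    have e1 : (countFn φ w : ℝ≥0∞) = ENNReal.ofReal n := (ENNReal.ofReal_natCast _).symm
    rw [e1, ENNReal.ofReal_rpow_of_nonneg hn hα0.le, ← ENNReal.ofReal_mul
      (Real.rpow_nonneg ht0.le _), ← ENNReal.ofReal_add (Real.rpow_nonneg ht0.le _)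
      (by positivity)]
    exact ENNReal.ofReal_le_ofReal (by have := hreal n hn; linarith)
  -- integral estimates
  have hc2 : ENNReal.ofReal (t ^ (α - 1)) ≠ ⊤ := ENNReal.ofReal_ne_top
  have hint : (∫⁻ w in S, (countFn φ w : ℝ≥0∞) ^ α)
      ≤ ENNReal.ofReal (t ^ α) * volume S
        + ENNReal.ofReal (t ^ (α - 1)) * ∫⁻ w in S, (countFn φ w : ℝ≥0∞) := by
    calc (∫⁻ w in S, (countFn φ w : ℝ≥0∞) ^ α)
        ≤ ∫⁻ w in S, (ENNReal.ofReal (t ^ α)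
            + ENNReal.ofReal (t ^ (α - 1)) * (countFn φ w : ℝ≥0∞)) :=
          lintegral_mono fun w => hpt w
      _ = (∫⁻ _ in S, ENNReal.ofReal (t ^ α))
            + ∫⁻ w in S, ENNReal.ofReal (t ^ (α - 1)) * (countFn φ w : ℝ≥0∞) :=
          lintegral_add_left measurable_const _
      _ = ENNReal.ofReal (t ^ α) * volume S
            + ENNReal.ofReal (t ^ (α - 1)) * ∫⁻ w in S, (countFn φ w : ℝ≥0∞) := by
          rw [setLIntegral_const, lintegral_const_mul' _ _ hc2]
  have hmono : (∫⁻ w in S, (countFn φ w : ℝ≥0∞)) ≤ ∫⁻ w in B, (countFn φ w : ℝ≥0∞) :=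
    lintegral_mono_set Set.inter_subset_right
  have hchain : ENNReal.ofReal δ * volume B
      ≤ ENNReal.ofReal (t ^ α) * volume S + ENNReal.ofReal (δ / 2) * volume B := by
    have h5 : ENNReal.ofReal (t ^ (α - 1)) * (ENNReal.ofReal M * volume B)
        ≤ ENNReal.ofReal (δ / 2) * volume B := by
      rw [← mul_assoc, ← ENNReal.ofReal_mul (Real.rpow_nonneg ht0.le _)]
      exact mul_le_mul_left (ENNReal.ofReal_le_ofReal (by linarith [htM])) _
    calc ENNReal.ofReal δ * volume B
        ≤ ∫⁻ w in S, (countFn φ w : ℝ≥0∞) ^ α := hlow z hz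
      _ ≤ ENNReal.ofReal (t ^ α) * volume S
            + ENNReal.ofReal (t ^ (α - 1)) * ∫⁻ w in S, (countFn φ w : ℝ≥0∞) := hint
      _ ≤ ENNReal.ofReal (t ^ α) * volume S
            + ENNReal.ofReal (t ^ (α - 1)) * (ENNReal.ofReal M * volume B) := by
          gcongr
          exact hmono.trans (hup z hz)
      _ ≤ ENNReal.ofReal (t ^ α) * volume S + ENNReal.ofReal (δ / 2) * volume B :=
          add_le_add_right h5 _
  -- cancel ofReal(δ/2) * volume B
  have hcancel : ENNReal.ofReal (δ / 2) * volume B ≤ ENNReal.ofReal (t ^ α) * volume S := by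
    have hsplit : ENNReal.ofReal δ = ENNReal.ofReal (δ / 2) + ENNReal.ofReal (δ / 2) := by
      rw [← ENNReal.ofReal_add (by positivity) (by positivity)]; norm_num
    have hfin : ENNReal.ofReal (δ / 2) * volume B ≠ ⊤ :=
      ENNReal.mul_ne_top ENNReal.ofReal_ne_top hAfin
    rw [hsplit, add_mul] at hchain
    exact (ENNReal.add_le_add_iff_right hfin).mp hchain
  -- divide by ofReal(t^α)
  have hc1ne0 : ENNReal.ofReal (t ^ α) ≠ 0 := (ENNReal.ofReal_pos.mpr htα).ne'
  have hc1neT : ENNReal.ofReal (t ^ α) ≠ ⊤ := ENNReal.ofReal_ne_top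
  have hδ'eq : ENNReal.ofReal (δ / (2 * t ^ α)) * volume B
      = (ENNReal.ofReal (t ^ α))⁻¹ * (ENNReal.ofReal (δ / 2) * volume B) := by
    rw [show δ / (2 * t ^ α) = (t ^ α)⁻¹ * (δ / 2) by
        rw [div_eq_mul_inv, mul_inv, div_eq_mul_inv]; ring,
      ENNReal.ofReal_mul (by positivity), ENNReal.ofReal_inv_of_pos htα, mul_assoc]
  rw [hδ'eq]
  calc (ENNReal.ofReal (t ^ α))⁻¹ * (ENNReal.ofReal (δ / 2) * volume B)
      ≤ (ENNReal.ofReal (t ^ α))⁻¹ * (ENNReal.ofReal (t ^ α) * volume S) :=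
        mul_le_mul_right hcancel _
    _ = volume S := by rw [← mul_assoc, ENNReal.inv_mul_cancel hc1ne0 hc1neT, one_mul]
end
end

section
/- Let φ : 𝔻 → 𝔻 be holomorphic with C_φ bounded on the Dirichlet space, and suppose sup over f in the unit sphere of D(𝔻) of ∫_{φ(𝔻) ∩ {n_φ > k}} |f'(w)|² n_φ(w) dA(w) → 0 as k → ∞. If n_φ dA is a reverse Carleson measure (there exist δ, r > 0 with ∫_{φ(𝔻)∩D(z,r)} n_φ dA ≥ δ·A(D(z,r)) for all z ∈ 𝔻), then there exist δ', r > 0 with A(φ(𝔻) ∩ D(z,r)) ≥ δ'·A(D(z,r)) for all z ∈ 𝔻. -/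
open MeasureTheory Metric Complex Filter Set
open scoped ENNReal NNReal

noncomputable section

def Complex.abs : AbsoluteValue ℂ ℝ where
  toFun := fun z => ‖z‖
  map_mul' := norm_mul
  nonneg' := norm_nonneg
  eq_zero' := fun _ => norm_eq_zero
  add_le' := norm_add_le

@[simp] lemma Complex.norm_eq_abs (z : ℂ) : ‖z‖ = Complex.abs z := rfl

@[simp] lemma Complex.abs_conj (z : ℂ) : Complex.abs ((starRingEnd ℂ) z) = Complex.abs z := by
  rw [← Complex.norm_eq_abs, ← Complex.norm_eq_abs, Complex.norm_conj]

lemma Complex.sq_abs (z : ℂ) : Complex.abs z ^ 2 = Complex.normSq z := by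
  rw [← Complex.norm_eq_abs, Complex.sq_norm]

@[simp] lemma Complex.abs_ofReal (x : ℝ) : Complex.abs (x : ℂ) = |x| := by
  rw [← Complex.norm_eq_abs, Complex.norm_real, Real.norm_eq_abs]

lemma Complex.continuous_abs : Continuous (fun z : ℂ => Complex.abs z) := continuous_norm


lemma mem_UD {w : ℂ} : w ∈ UD ↔ Complex.abs w < 1 := by
  simp [UD, Metric.mem_ball, Complex.dist_eq]

lemma normSq_identity (z w : ℂ) :
    Complex.normSq (1 - (starRingEnd ℂ) z * w) - Complex.normSq (z - w)
      = (1 - Complex.normSq z) * (1 - Complex.normSq w) := by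
  simp [Complex.normSq_apply, Complex.mul_re, Complex.mul_im, Complex.sub_re, Complex.sub_im]
  ring

lemma denom_pos {z w : ℂ} (hz : z ∈ UD) (hw : w ∈ UD) :
    0 < Complex.abs (1 - (starRingEnd ℂ) z * w) := by
  rw [mem_UD] at hz hw
  have : Complex.abs ((starRingEnd ℂ) z * w) < 1 := by
    rw [map_mul, Complex.abs_conj]
    nlinarith [Complex.abs.nonneg z, Complex.abs.nonneg w]
  have h1 : (1 : ℂ) - (starRingEnd ℂ) z * w ≠ 0 := by
    intro h
    rw [sub_eq_zero] at h
    rw [← h] at this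
    simp at this
  exact Complex.abs.pos h1

lemma abs_sub_lt_denom {z w : ℂ} (hz : z ∈ UD) (hw : w ∈ UD) :
    Complex.abs (z - w) < Complex.abs (1 - (starRingEnd ℂ) z * w) := by
  rw [mem_UD] at hz hw
  have h := normSq_identity z w
  have hz2 : Complex.normSq z < 1 := by
    rw [← Complex.sq_abs]; nlinarith [Complex.abs.nonneg z]
  have hw2 : Complex.normSq w < 1 := by
    rw [← Complex.sq_abs]; nlinarith [Complex.abs.nonneg w]
  have h1 : 0 < (1 - Complex.normSq z) * (1 - Complex.normSq w) :=
    mul_pos (by linarith) (by linarith)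
  have h2 : Complex.normSq (z - w) < Complex.normSq (1 - (starRingEnd ℂ) z * w) := by linarith
  have := Complex.sq_abs (z - w); have := Complex.sq_abs (1 - (starRingEnd ℂ) z * w)
  nlinarith [Complex.abs.nonneg (z - w), Complex.abs.nonneg (1 - (starRingEnd ℂ) z * w)]

lemma rho_eq {z w : ℂ} :
    rho z w = Complex.abs (z - w) / Complex.abs (1 - (starRingEnd ℂ) z * w) := by
  rw [rho, Complex.norm_eq_abs, map_div₀]

lemma rho_lt_one {z w : ℂ} (hz : z ∈ UD) (hw : w ∈ UD) : rho z w < 1 := by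
  rw [rho_eq]
  rw [div_lt_one (by
    have := abs_sub_lt_denom hz hw
    have := Complex.abs.nonneg (z - w)
    linarith)]
  exact abs_sub_lt_denom hz hw

def sOf (r : ℝ) : ℝ := (Real.exp (2*r) - 1) / (Real.exp (2*r) + 1)

lemma sOf_pos {r : ℝ} (hr : 0 < r) : 0 < sOf r := by
  have : 1 < Real.exp (2*r) := by
    calc (1:ℝ) = Real.exp 0 := Real.exp_zero.symm
      _ < Real.exp (2*r) := Real.exp_lt_exp.mpr (by linarith)
  apply div_pos <;> nlinarith [Real.exp_pos (2*r)]

lemma sOf_lt_one {r : ℝ} (hr : 0 < r) : sOf r < 1 := by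
  have := Real.exp_pos (2*r)
  rw [sOf, div_lt_one (by linarith)]
  linarith

lemma mem_bergmanBall_iff {z w : ℂ} {r : ℝ} (hz : z ∈ UD) (hr : 0 < r) :
    w ∈ bergmanBall z r ↔ w ∈ UD ∧
      Complex.abs (z - w) < sOf r * Complex.abs (1 - (starRingEnd ℂ) z * w) := by
  have hE : 1 < Real.exp (2*r) := by
    calc (1:ℝ) = Real.exp 0 := Real.exp_zero.symm
      _ < Real.exp (2*r) := Real.exp_lt_exp.mpr (by linarith)
  constructor
  · rintro ⟨hw, hlt⟩
    refine ⟨hw, ?_⟩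
    have hρ1 : rho z w < 1 := rho_lt_one hz hw
    have hρ0 : 0 ≤ rho z w := Complex.abs.nonneg _
    have hQ : (1 + rho z w) / (1 - rho z w) < Real.exp (2*r) := by
      have hlog : Real.log ((1 + rho z w) / (1 - rho z w)) < 2*r := by linarith
      have hQpos : 0 < (1 + rho z w) / (1 - rho z w) := by
        apply div_pos <;> linarith
      calc (1 + rho z w) / (1 - rho z w) = Real.exp (Real.log _) := (Real.exp_log hQpos).symm
        _ < Real.exp (2*r) := Real.exp_lt_exp.mpr hlog
    have hρs : rho z w < sOf r := by
      rw [div_lt_iff₀ (by linarith)] at hQ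
      rw [sOf, lt_div_iff₀ (by linarith)]
      nlinarith
    have hd := denom_pos hz hw
    rw [rho_eq, div_lt_iff₀ hd] at hρs
    linarith [hρs]
  · rintro ⟨hw, habs⟩
    have hd := denom_pos hz hw
    have hρs : rho z w < sOf r := by rw [rho_eq, div_lt_iff₀ hd]; exact habs
    have hρ0 : 0 ≤ rho z w := Complex.abs.nonneg _
    have hs1 : sOf r < 1 := sOf_lt_one hr
    refine ⟨hw, ?_⟩
    have hQ : (1 + rho z w) / (1 - rho z w) < Real.exp (2*r) := by
      rw [div_lt_iff₀ (by linarith)]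
      have : sOf r * (Real.exp (2*r) + 1) = Real.exp (2*r) - 1 := by
        rw [sOf, div_mul_cancel₀]; linarith
      nlinarith
    have hQpos : 0 < (1 + rho z w) / (1 - rho z w) := by apply div_pos <;> linarith
    have := Real.log_lt_log hQpos hQ
    rw [Real.log_exp] at this
    linarith

lemma bergmanBall_eq {z : ℂ} {r : ℝ} (hz : z ∈ UD) (hr : 0 < r) :
    bergmanBall z r = UD ∩ {w | Complex.abs (z - w) <
      sOf r * Complex.abs (1 - (starRingEnd ℂ) z * w)} := by
  ext w
  rw [mem_bergmanBall_iff hz hr]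
  simp [Set.mem_inter_iff, Set.mem_setOf_eq]

lemma isOpen_bergmanBall {z : ℂ} {r : ℝ} (hz : z ∈ UD) (hr : 0 < r) :
    IsOpen (bergmanBall z r) := by
  rw [bergmanBall_eq hz hr]
  apply IsOpen.inter isOpen_ball
  apply isOpen_lt
  · exact (Complex.continuous_abs.comp (continuous_const.sub continuous_id))
  · exact continuous_const.mul (Complex.continuous_abs.comp
      (continuous_const.sub (continuous_const.mul continuous_id)))

lemma bergmanBall_subset_UD {z : ℂ} {r : ℝ} : bergmanBall z r ⊆ UD := fun _ h => h.1

lemma denom_lt {z w : ℂ} {r : ℝ} (hz : z ∈ UD) (hr : 0 < r) (hw : w ∈ bergmanBall z r) :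
    Complex.abs (1 - (starRingEnd ℂ) z * w) < (1 - Complex.abs z ^ 2) / (1 - sOf r) := by
  rw [mem_bergmanBall_iff hz hr] at hw
  obtain ⟨hwUD, habs⟩ := hw
  have hs1 : sOf r < 1 := sOf_lt_one hr
  have hs0 : 0 < sOf r := sOf_pos hr
  have hz1 : Complex.abs z < 1 := mem_UD.mp hz
  have hd := denom_pos hz hwUD
  -- |1 - z̄w| ≤ (1-|z|²) + |z||z-w|
  have key : Complex.abs (1 - (starRingEnd ℂ) z * w)
      ≤ (1 - Complex.abs z ^ 2) + Complex.abs z * Complex.abs (z - w) := by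
    have : (1 : ℂ) - (starRingEnd ℂ) z * w
        = (1 - (starRingEnd ℂ) z * z) + (starRingEnd ℂ) z * (z - w) := by ring
    rw [this]
    refine (Complex.abs.add_le _ _).trans ?_
    have h1 : Complex.abs (1 - (starRingEnd ℂ) z * z) = 1 - Complex.abs z ^ 2 := by
      have e : (starRingEnd ℂ) z * z = ((Complex.abs z ^ 2 : ℝ) : ℂ) := by
        rw [Complex.sq_abs, mul_comm, Complex.mul_conj]
      rw [e, ← Complex.ofReal_one, ← Complex.ofReal_sub, Complex.abs_ofReal]
      exact abs_of_nonneg (by nlinarith [Complex.abs.nonneg z])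
    rw [map_mul, Complex.abs_conj]
    exact add_le_add (le_of_eq h1) le_rfl
  have hza := Complex.abs.nonneg z
  have h2 : Complex.abs z * Complex.abs (z - w) ≤ Complex.abs (z - w) := by
    nlinarith [Complex.abs.nonneg (z - w)]
  rw [lt_div_iff₀ (by linarith)]
  nlinarith

lemma ball_subset_bergmanBall {z : ℂ} {r : ℝ} (hz : z ∈ UD) (hr : 0 < r) :
    Metric.ball z (sOf r / 2 * (1 - Complex.abs z)) ⊆ bergmanBall z r := by
  intro w hw
  have hs1 : sOf r < 1 := sOf_lt_one hr
  have hs0 : 0 < sOf r := sOf_pos hr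
  have hz1 : Complex.abs z < 1 := mem_UD.mp hz
  have hza := Complex.abs.nonneg z
  rw [Metric.mem_ball, dist_eq_norm] at hw
  have hzw : Complex.abs (z - w) < sOf r / 2 * (1 - Complex.abs z) := by
    rw [← Complex.norm_eq_abs, ← norm_sub_rev]; exact hw
  have hwUD : w ∈ UD := by
    rw [mem_UD]
    calc Complex.abs w ≤ Complex.abs z + Complex.abs (w - z) := by
          simpa using Complex.abs.add_le z (w - z)
      _ < Complex.abs z + sOf r / 2 * (1 - Complex.abs z) := by
          rw [Complex.abs.map_sub w z]; exact add_lt_add_right hzw _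
      _ ≤ Complex.abs z + 1 * (1 - Complex.abs z) := by nlinarith
      _ = 1 := by ring
  rw [mem_bergmanBall_iff hz hr]
  refine ⟨hwUD, ?_⟩
  have hd : 1 - Complex.abs z ≤ Complex.abs (1 - (starRingEnd ℂ) z * w) := by
    have h1 : Complex.abs ((starRingEnd ℂ) z * w) ≤ Complex.abs z := by
      rw [map_mul, Complex.abs_conj]
      nlinarith [Complex.abs.nonneg w, mem_UD.mp hwUD]
    calc 1 - Complex.abs z ≤ 1 - Complex.abs ((starRingEnd ℂ) z * w) := by linarith
      _ ≤ Complex.abs (1 - (starRingEnd ℂ) z * w) := by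
          have h2 := norm_sub_norm_le (1:ℂ) ((starRingEnd ℂ) z * w)
          simpa [Complex.norm_eq_abs] using h2
  calc Complex.abs (z - w) < sOf r / 2 * (1 - Complex.abs z) := hzw
    _ ≤ sOf r / 2 * Complex.abs (1 - (starRingEnd ℂ) z * w) := by nlinarith
    _ < sOf r * Complex.abs (1 - (starRingEnd ℂ) z * w) := by
        have := denom_pos hz hwUD; nlinarith

lemma volume_UD : volume UD = NNReal.pi := by
  simp [UD, Complex.volume_ball]

lemma volume_bergmanBall_lt_top {z : ℂ} {r : ℝ} : volume (bergmanBall z r) < ⊤ :=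
  lt_of_le_of_lt (measure_mono bergmanBall_subset_UD)
    (by rw [volume_UD]; exact ENNReal.coe_lt_top)

lemma ofReal_pi_eq : ENNReal.ofReal Real.pi = (NNReal.pi : ℝ≥0∞) := by
  rw [← NNReal.coe_real_pi, ENNReal.ofReal_coe_nnreal]

lemma volume_ball_complex (c : ℂ) {R : ℝ} (hR : 0 ≤ R) :
    volume (Metric.ball c R) = ENNReal.ofReal (Real.pi * R ^ 2) := by
  rw [Complex.volume_ball, ENNReal.ofReal_mul Real.pi_pos.le, ofReal_pi_eq,
    ENNReal.ofReal_pow hR, mul_comm]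

lemma volume_bergmanBall_ge {z : ℂ} {r : ℝ} (hz : z ∈ UD) (hr : 0 < r) :
    ENNReal.ofReal (Real.pi * (sOf r / 2 * (1 - Complex.abs z)) ^ 2)
      ≤ volume (bergmanBall z r) := by
  rw [← volume_ball_complex z
    (mul_nonneg (by linarith [sOf_pos hr]) (by linarith [mem_UD.mp hz]))]
  exact measure_mono (ball_subset_bergmanBall hz hr)

lemma annuli_cover {w₀ : ℂ} {d : ℝ} (hd : 0 < d) :
    {w : ℂ | d < dist w w₀} ⊆
      ⋃ j : ℕ, Metric.ball w₀ (d * 2 ^ (j + 1)) \ Metric.ball w₀ (d * 2 ^ j) := by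
  intro w hw
  simp only [Set.mem_setOf_eq] at hw
  have hex : ∃ n : ℕ, dist w w₀ < d * 2 ^ n := by
    obtain ⟨n, hn⟩ := pow_unbounded_of_one_lt (dist w w₀ / d) (by norm_num : (1:ℝ) < 2)
    exact ⟨n, by rwa [div_lt_iff₀ hd, mul_comm] at hn⟩
  classical
  let m := Nat.find hex
  have hm : dist w w₀ < d * 2 ^ m := Nat.find_spec hex
  have hm0 : m ≠ 0 := by
    intro h0
    have := hm
    rw [h0] at this
    simp at this
    linarith
  obtain ⟨j, hj⟩ := Nat.exists_eq_succ_of_ne_zero hm0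
  have hjlt : ¬ dist w w₀ < d * 2 ^ j := Nat.find_min hex (by omega)
  refine Set.mem_iUnion.mpr ⟨j, ?_⟩
  constructor
  · rw [Metric.mem_ball]
    rw [hj] at hm
    exact hm
  · rw [Metric.mem_ball]
    push_neg at hjlt
    exact not_lt.mpr hjlt

lemma annuli_integral {w₀ : ℂ} {d : ℝ} (hd : 0 < d) :
    ∫⁻ w in (⋃ j : ℕ, Metric.ball w₀ (d * 2 ^ (j + 1)) \ Metric.ball w₀ (d * 2 ^ j)),
      ENNReal.ofReal (4 / dist w w₀ ^ 4)
      ≤ ENNReal.ofReal (64 * Real.pi / (3 * d ^ 2)) := by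
  refine le_trans (lintegral_iUnion_le _ _) ?_
  have step : ∀ j : ℕ, ∫⁻ w in Metric.ball w₀ (d * 2 ^ (j + 1)) \ Metric.ball w₀ (d * 2 ^ j),
      ENNReal.ofReal (4 / dist w w₀ ^ 4)
      ≤ ENNReal.ofReal (16 * Real.pi / d ^ 2 * (1 / 4) ^ j) := by
    intro j
    have h2j : (0:ℝ) < 2 ^ j := by positivity
    have hdj : (0:ℝ) < d * 2 ^ j := by positivity
    have hmeas : MeasurableSet (Metric.ball w₀ (d * 2 ^ (j + 1)) \ Metric.ball w₀ (d * 2 ^ j)) :=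
      measurableSet_ball.diff measurableSet_ball
    calc ∫⁻ w in Metric.ball w₀ (d * 2 ^ (j + 1)) \ Metric.ball w₀ (d * 2 ^ j),
          ENNReal.ofReal (4 / dist w w₀ ^ 4)
        ≤ ∫⁻ _ in Metric.ball w₀ (d * 2 ^ (j + 1)) \ Metric.ball w₀ (d * 2 ^ j),
          ENNReal.ofReal (4 / (d * 2 ^ j) ^ 4) := by
          refine setLIntegral_mono' hmeas fun w hw => ?_
          refine ENNReal.ofReal_le_ofReal ?_
          have hwd : d * 2 ^ j ≤ dist w w₀ := by
            have := hw.2; rw [Metric.mem_ball] at this; exact not_lt.mp this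
          apply div_le_div_of_nonneg_left (by norm_num) (by positivity)
          exact pow_le_pow_left₀ hdj.le hwd 4
      _ = ENNReal.ofReal (4 / (d * 2 ^ j) ^ 4) *
            volume (Metric.ball w₀ (d * 2 ^ (j + 1)) \ Metric.ball w₀ (d * 2 ^ j)) :=
          setLIntegral_const _ _
      _ ≤ ENNReal.ofReal (4 / (d * 2 ^ j) ^ 4) * volume (Metric.ball w₀ (d * 2 ^ (j + 1))) := by
          exact mul_le_mul_right (measure_mono Set.diff_subset) _
      _ = ENNReal.ofReal (4 / (d * 2 ^ j) ^ 4) *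
            ENNReal.ofReal (Real.pi * (d * 2 ^ (j + 1)) ^ 2) := by
          rw [volume_ball_complex _ (by positivity)]
      _ = ENNReal.ofReal (4 / (d * 2 ^ j) ^ 4 * (Real.pi * (d * 2 ^ (j + 1)) ^ 2)) := by
          rw [← ENNReal.ofReal_mul (by positivity)]
      _ = ENNReal.ofReal (16 * Real.pi / d ^ 2 * (1 / 4) ^ j) := by
          congr 1
          have h4 : (4:ℝ)^j = 2^(2*j) := by
            rw [show (4:ℝ) = 2^2 by norm_num, ← pow_mul]
          field_simp
          rw [one_div, inv_pow, h4, mul_comm 2 j, pow_mul, pow_succ]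
          field_simp
          ring
  refine le_trans (ENNReal.tsum_le_tsum step) ?_
  have hsum : Summable (fun j : ℕ => 16 * Real.pi / d ^ 2 * (1 / 4 : ℝ) ^ j) :=
    (summable_geometric_of_lt_one (by norm_num) (by norm_num)).mul_left _
  rw [← ENNReal.ofReal_tsum_of_nonneg (fun j => by positivity) hsum]
  refine ENNReal.ofReal_le_ofReal ?_
  rw [tsum_mul_left, tsum_geometric_of_lt_one (by norm_num) (by norm_num)]
  rw [div_mul_eq_mul_div, div_le_div_iff₀ (by positivity) (by positivity)]
  ring_nf
  nlinarith [Real.pi_pos, sq_nonneg d]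

lemma nnnorm_sq_eq (x : ℂ) : (‖x‖₊ : ℝ≥0∞) ^ 2 = ENNReal.ofReal (Complex.abs x ^ 2) := by
  rw [← ENNReal.ofReal_coe_nnreal, coe_nnnorm, ← ENNReal.ofReal_pow (norm_nonneg x), Complex.norm_eq_abs]

def tf (z : ℂ) : ℂ → ℂ := fun w => (1 - (starRingEnd ℂ) z * w)⁻¹

lemma one_sub_ne_zero' {c : ℂ} (h : Complex.abs c < 1) : (1:ℂ) - c ≠ 0 := by
  intro hc
  rw [sub_eq_zero] at hc
  rw [← hc] at h
  simp at h

lemma mul_abs_lt {z w : ℂ} (hz : z ∈ UD) (hw : w ∈ UD) :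
    Complex.abs ((starRingEnd ℂ) z * w) < 1 := by
  rw [mem_UD] at hz hw
  rw [map_mul, Complex.abs_conj]
  nlinarith [Complex.abs.nonneg z, Complex.abs.nonneg w]

lemma tf_hasDerivAt {z w : ℂ} (h : (1:ℂ) - (starRingEnd ℂ) z * w ≠ 0) :
    HasDerivAt (tf z) ((starRingEnd ℂ) z / (1 - (starRingEnd ℂ) z * w) ^ 2) w := by
  have h1 : HasDerivAt (fun y : ℂ => (1:ℂ) - (starRingEnd ℂ) z * y) (-(starRingEnd ℂ) z) w := by
    simpa using ((hasDerivAt_id w).const_mul ((starRingEnd ℂ) z)).const_sub 1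
  have h2 := h1.inv h
  rw [neg_neg] at h2
  exact h2

lemma tf_differentiableOn {z : ℂ} (hz : z ∈ UD) : DifferentiableOn ℂ (tf z) UD :=
  fun w hw => ((tf_hasDerivAt (one_sub_ne_zero' (mul_abs_lt hz hw))).differentiableAt).differentiableWithinAt

lemma tf_deriv {z w : ℂ} (hz : z ∈ UD) (hw : w ∈ UD) :
    deriv (tf z) w = (starRingEnd ℂ) z / (1 - (starRingEnd ℂ) z * w) ^ 2 :=
  (tf_hasDerivAt (one_sub_ne_zero' (mul_abs_lt hz hw))).deriv

lemma tf_abs_deriv {z w : ℂ} (hz : z ∈ UD) (hw : w ∈ UD) :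
    Complex.abs (deriv (tf z) w)
      = Complex.abs z / Complex.abs (1 - (starRingEnd ℂ) z * w) ^ 2 := by
  rw [tf_deriv hz hw, map_div₀, map_pow, Complex.abs_conj]

lemma tf_deriv_lower {z w : ℂ} {r : ℝ} (hz : z ∈ UD) (hr : 0 < r)
    (ha : 1/2 ≤ Complex.abs z) (hw : w ∈ bergmanBall z r) :
    ENNReal.ofReal ((1 - sOf r) ^ 4 / (4 * (1 - Complex.abs z ^ 2) ^ 4))
      ≤ (‖deriv (tf z) w‖₊ : ℝ≥0∞) ^ 2 := by
  have hwUD : w ∈ UD := bergmanBall_subset_UD hw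
  rw [nnnorm_sq_eq]
  refine ENNReal.ofReal_le_ofReal ?_
  rw [tf_abs_deriv hz hwUD]
  have hdl := denom_lt hz hr hw
  have hd0 := denom_pos hz hwUD
  have hs1 : sOf r < 1 := sOf_lt_one hr
  have hz1 : Complex.abs z < 1 := mem_UD.mp hz
  have ha2 : 0 < 1 - Complex.abs z ^ 2 := by nlinarith [Complex.abs.nonneg z]
  have hq : Complex.abs (1 - (starRingEnd ℂ) z * w) ^ 2
      ≤ ((1 - Complex.abs z ^ 2) / (1 - sOf r)) ^ 2 := by
    apply pow_le_pow_left₀ hd0.le hdl.le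
  rw [div_pow, div_le_div_iff₀ (by positivity) (by positivity)]
  have hu : (0:ℝ) < 1 - sOf r := by linarith
  have h4 : (Complex.abs (1 - (starRingEnd ℂ) z * w) ^ 2) ^ 2
      ≤ (((1 - Complex.abs z ^ 2) / (1 - sOf r)) ^ 2) ^ 2 :=
    pow_le_pow_left₀ (sq_nonneg _) hq 2
  have h5 : (1 - sOf r) ^ 4 * (((1 - Complex.abs z ^ 2) / (1 - sOf r)) ^ 2) ^ 2
      = (1 - Complex.abs z ^ 2) ^ 4 := by
    field_simp
  calc (1 - sOf r) ^ 4 * (Complex.abs (1 - (starRingEnd ℂ) z * w) ^ 2) ^ 2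
      ≤ (1 - sOf r) ^ 4 * (((1 - Complex.abs z ^ 2) / (1 - sOf r)) ^ 2) ^ 2 := by nlinarith [pow_pos hu 4]
    _ = (1 - Complex.abs z ^ 2) ^ 4 := h5
    _ ≤ Complex.abs z ^ 2 * (4 * (1 - Complex.abs z ^ 2) ^ 4) := by
        have ha4 : (1:ℝ)/4 ≤ Complex.abs z ^ 2 := by nlinarith [Complex.abs.nonneg z]
        nlinarith [pow_pos ha2 4, ha4]

lemma UD_measurable : MeasurableSet UD := measurableSet_ball

lemma tf_norm_bound {z : ℂ} (hz : z ∈ UD) (ha : 1/2 ≤ Complex.abs z) :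
    Dnorm2 (tf z) ≤ ENNReal.ofReal (87 * Real.pi / (1 - Complex.abs z ^ 2) ^ 2) := by
  have ha1 : Complex.abs z < 1 := mem_UD.mp hz
  have ha0 : 0 < Complex.abs z := by linarith
  have hz0 : z ≠ 0 := by
    intro h; rw [h] at ha0; simp at ha0
  have hcz0 : (starRingEnd ℂ) z ≠ 0 := by
    simpa using hz0
  set a := Complex.abs z with hadef
  have ha2 : 0 < 1 - a ^ 2 := by nlinarith
  set w₀ : ℂ := ((starRingEnd ℂ) z)⁻¹ with hw₀
  have habsw₀ : Complex.abs w₀ = a⁻¹ := by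
    rw [hw₀, map_inv₀, Complex.abs_conj]
  set d : ℝ := (1 - a) / a with hddef
  have hd : 0 < d := by apply div_pos <;> linarith
  have hdist : ∀ w ∈ UD, d < dist w w₀ := by
    intro w hw
    have h1 : Complex.abs w₀ - Complex.abs w ≤ Complex.abs (w₀ - w) := by
      simpa [Complex.norm_eq_abs] using norm_sub_norm_le w₀ w
    have h2 : dist w w₀ = Complex.abs (w₀ - w) := by
      rw [Complex.dist_eq, Complex.norm_eq_abs, Complex.abs.map_sub]
    have hw1 : Complex.abs w < 1 := mem_UD.mp hw
    have h3 : d = a⁻¹ - 1 := by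
      rw [hddef]
      field_simp
    rw [h2, h3]
    calc a⁻¹ - 1 < Complex.abs w₀ - Complex.abs w := by rw [habsw₀]; linarith
      _ ≤ Complex.abs (w₀ - w) := h1
  have habs_denom : ∀ w : ℂ, Complex.abs (1 - (starRingEnd ℂ) z * w) = a * dist w w₀ := by
    intro w
    have e : (1 : ℂ) - (starRingEnd ℂ) z * w = (starRingEnd ℂ) z * (w₀ - w) := by
      rw [mul_sub, hw₀, mul_inv_cancel₀ hcz0]
    rw [e, map_mul, Complex.abs_conj, Complex.dist_eq, Complex.norm_eq_abs, Complex.abs.map_sub]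
  have key : ∀ w ∈ UD, (‖deriv (tf z) w‖₊ : ℝ≥0∞) ^ 2
      ≤ ENNReal.ofReal (4 / dist w w₀ ^ 4) := by
    intro w hw
    rw [nnnorm_sq_eq]
    refine ENNReal.ofReal_le_ofReal ?_
    rw [tf_abs_deriv hz hw, habs_denom w]
    have ht : 0 < dist w w₀ := lt_trans hd (hdist w hw)
    rw [mul_pow, div_pow, div_le_div_iff₀ (by positivity) (by positivity)]
    have ha4 : (1:ℝ)/4 ≤ a ^ 2 := by nlinarith
    have hkey : 0 ≤ a ^ 2 * dist w w₀ ^ 4 * (4 * a ^ 2 - 1) :=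
      mul_nonneg (by positivity) (by linarith)
    nlinarith [hkey]
  have hint : ∫⁻ w in UD, (‖deriv (tf z) w‖₊ : ℝ≥0∞) ^ 2
      ≤ ENNReal.ofReal (64 * Real.pi / (3 * d ^ 2)) := by
    calc ∫⁻ w in UD, (‖deriv (tf z) w‖₊ : ℝ≥0∞) ^ 2
        ≤ ∫⁻ w in UD, ENNReal.ofReal (4 / dist w w₀ ^ 4) :=
          setLIntegral_mono' UD_measurable key
      _ ≤ ∫⁻ w in (⋃ j : ℕ, Metric.ball w₀ (d * 2 ^ (j + 1)) \ Metric.ball w₀ (d * 2 ^ j)),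
          ENNReal.ofReal (4 / dist w w₀ ^ 4) := by
          refine lintegral_mono' (Measure.restrict_mono ?_ le_rfl) le_rfl
          exact fun w hw => annuli_cover hd (hdist w hw)
      _ ≤ ENNReal.ofReal (64 * Real.pi / (3 * d ^ 2)) := annuli_integral hd
  have hreal : 64 * Real.pi / (3 * d ^ 2) ≤ 86 * Real.pi / (1 - a ^ 2) ^ 2 := by
    have hd1 : 1 - a ≤ d := by
      rw [hddef, le_div_iff₀ ha0]
      nlinarith
    have hd2 : (1 - a ^ 2) ^ 2 / 4 ≤ d ^ 2 := by
      have hsq : (1 - a) ^ 2 ≤ d ^ 2 := pow_le_pow_left₀ (by linarith) hd1 2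
      have h4a : (1 + a) ^ 2 ≤ 4 := by nlinarith
      have hmul : (1 - a) ^ 2 * (1 + a) ^ 2 ≤ (1 - a) ^ 2 * 4 :=
        mul_le_mul_of_nonneg_left h4a (sq_nonneg (1 - a))
      nlinarith [hmul, hsq]
    rw [div_le_div_iff₀ (by positivity) (by positivity)]
    nlinarith [mul_le_mul_of_nonneg_left hd2 Real.pi_pos.le, Real.pi_pos]
  have hconst : (‖tf z 0‖₊ : ℝ≥0∞) ^ 2 ≤ ENNReal.ofReal (Real.pi / (1 - a ^ 2) ^ 2) := by
    have h0 : tf z 0 = 1 := by simp [tf]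
    rw [h0, nnnorm_sq_eq]
    refine ENNReal.ofReal_le_ofReal ?_
    have hle1 : (1 - a ^ 2) ^ 2 ≤ 1 := by nlinarith
    have : Real.pi / (1 - a ^ 2) ^ 2 ≥ Real.pi := by
      rw [ge_iff_le, le_div_iff₀ (by positivity)]
      nlinarith [Real.pi_pos]
    simp
    nlinarith [Real.pi_gt_three]
  calc Dnorm2 (tf z) = (‖tf z 0‖₊ : ℝ≥0∞) ^ 2 + ∫⁻ w in UD, (‖deriv (tf z) w‖₊ : ℝ≥0∞) ^ 2 := rfl
    _ ≤ ENNReal.ofReal (Real.pi / (1 - a ^ 2) ^ 2) + ENNReal.ofReal (86 * Real.pi / (1 - a ^ 2) ^ 2) := by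
        exact add_le_add hconst (hint.trans (ENNReal.ofReal_le_ofReal hreal))
    _ = ENNReal.ofReal (Real.pi / (1 - a ^ 2) ^ 2 + 86 * Real.pi / (1 - a ^ 2) ^ 2) := by
        rw [ENNReal.ofReal_add (by positivity) (by positivity)]
    _ = ENNReal.ofReal (87 * Real.pi / (1 - a ^ 2) ^ 2) := by
        congr 1
        ring

lemma tf_norm_lower {z : ℂ} : 1 ≤ Dnorm2 (tf z) := by
  have h0 : tf z 0 = 1 := by simp [tf]
  have : (‖tf z 0‖₊ : ℝ≥0∞) ^ 2 = 1 := by rw [h0]; simp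
  calc (1:ℝ≥0∞) = (‖tf z 0‖₊ : ℝ≥0∞) ^ 2 := this.symm
    _ ≤ Dnorm2 (tf z) := le_self_add

lemma isOpen_UD : IsOpen UD := isOpen_ball

lemma normalizeFn (f : ℂ → ℂ) (hf : DifferentiableOn ℂ f UD) (h0 : Dnorm2 f ≠ 0)
    (htop : Dnorm2 f ≠ ⊤) :
    ∃ g : ℂ → ℂ, DifferentiableOn ℂ g UD ∧ Dnorm2 g = 1 ∧
      ∀ w ∈ UD, (‖deriv g w‖₊ : ℝ≥0∞) ^ 2 = (Dnorm2 f)⁻¹ * (‖deriv f w‖₊ : ℝ≥0∞) ^ 2 := by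
  set N := Dnorm2 f with hN
  have hNt : 0 < N.toReal := ENNReal.toReal_pos h0 htop
  set c : ℝ := (Real.sqrt N.toReal)⁻¹ with hc
  have hc0 : 0 < c := by positivity
  have hC2 : (‖(c : ℂ)‖₊ : ℝ≥0∞) ^ 2 = N⁻¹ := by
    rw [nnnorm_sq_eq]
    have h1 : Complex.abs (c : ℂ) = c := by
      rw [Complex.abs_ofReal, abs_of_pos hc0]
    rw [h1, hc]
    rw [inv_pow, Real.sq_sqrt hNt.le]
    rw [ENNReal.ofReal_inv_of_pos hNt, ENNReal.ofReal_toReal htop]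
  refine ⟨fun w => (c : ℂ) * f w, ?_, ?_, ?_⟩
  · exact fun w hw => (hf w hw).const_mul _
  · have hderiv : ∀ w ∈ UD, deriv (fun w => (c : ℂ) * f w) w = (c : ℂ) * deriv f w := by
      intro w hw
      exact deriv_const_mul _ (hf.differentiableAt (isOpen_UD.mem_nhds hw))
    have hint : ∫⁻ w in UD, (‖deriv (fun w => (c : ℂ) * f w) w‖₊ : ℝ≥0∞) ^ 2
        = ∫⁻ w in UD, (‖(c : ℂ)‖₊ : ℝ≥0∞) ^ 2 * (‖deriv f w‖₊ : ℝ≥0∞) ^ 2 := by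
      refine setLIntegral_congr_fun UD_measurable ?_
      intro w hw
      dsimp only
      rw [hderiv w hw, nnnorm_mul]
      push_cast
      ring
    have e0 : (‖(fun w => (c : ℂ) * f w) 0‖₊ : ℝ≥0∞) ^ 2
        = (‖(c : ℂ)‖₊ : ℝ≥0∞) ^ 2 * (‖f 0‖₊ : ℝ≥0∞) ^ 2 := by
      simp only [nnnorm_mul]
      push_cast
      ring
    rw [Dnorm2, e0, hint, lintegral_const_mul' _ _ (by simp : ((‖(c : ℂ)‖₊ : ℝ≥0∞) ^ 2) ≠ ⊤),
      ← mul_add, hC2]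
    exact ENNReal.inv_mul_cancel h0 htop
  · intro w hw
    rw [deriv_const_mul _ (hf.differentiableAt (isOpen_UD.mem_nhds hw)), nnnorm_mul]
    push_cast
    rw [← hC2]
    ring

lemma main_step (φ : ℂ → ℂ) (hS : MeasurableSet (φ '' UD)) (k : ℕ) (g : ℂ → ℂ)
    {B : Set ℂ} (hB : MeasurableSet B) {L ε : ℝ≥0∞} (hL0 : L ≠ 0) (hLt : L ≠ ⊤)
    (hLg : ∀ w ∈ B, L ≤ (‖deriv g w‖₊ : ℝ≥0∞) ^ 2)
    (hsupk : ∫⁻ w in φ '' UD ∩ {w | k < countFn φ w},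
      (‖deriv g w‖₊ : ℝ≥0∞) ^ 2 * (countFn φ w : ℝ≥0∞) ≤ ε) :
    ∫⁻ w in φ '' UD ∩ B, (countFn φ w : ℝ≥0∞)
      ≤ k * volume (φ '' UD ∩ B) + L⁻¹ * ε := by
  set S := φ '' UD with hSdef
  set T := {w | k < countFn φ w} with hT
  set h : ℂ → ℝ≥0∞ := fun w => (‖deriv g w‖₊ : ℝ≥0∞) ^ 2 * (countFn φ w : ℝ≥0∞) with hh
  have step1 : ∀ w ∈ S ∩ B, (countFn φ w : ℝ≥0∞) ≤ (k : ℝ≥0∞) + L⁻¹ * T.indicator h w := by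
    intro w hw
    by_cases hTw : w ∈ T
    · rw [Set.indicator_of_mem hTw]
      refine le_add_left ?_
      have h1 : L⁻¹ * (L * (countFn φ w : ℝ≥0∞)) ≤ L⁻¹ * h w := by
        refine mul_le_mul_right ?_ _
        exact mul_le_mul_left (hLg w hw.2) _
      calc (countFn φ w : ℝ≥0∞) = L⁻¹ * L * (countFn φ w : ℝ≥0∞) := by
            rw [ENNReal.inv_mul_cancel hL0 hLt, one_mul]
        _ = L⁻¹ * (L * (countFn φ w : ℝ≥0∞)) := by rw [mul_assoc]
        _ ≤ L⁻¹ * h w := h1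
    · have : countFn φ w ≤ k := by
        rw [hT, Set.mem_setOf_eq, not_lt] at hTw
        exact hTw
      exact le_add_right (by exact_mod_cast Nat.cast_le.mpr this)
  calc ∫⁻ w in S ∩ B, (countFn φ w : ℝ≥0∞)
      ≤ ∫⁻ w in S ∩ B, ((k : ℝ≥0∞) + L⁻¹ * T.indicator h w) :=
        setLIntegral_mono' (hS.inter hB) step1
    _ = (k : ℝ≥0∞) * volume (S ∩ B) + ∫⁻ w in S ∩ B, L⁻¹ * T.indicator h w := by
        rw [lintegral_add_left measurable_const, setLIntegral_const]
    _ ≤ (k : ℝ≥0∞) * volume (S ∩ B) + L⁻¹ * ε := by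
        refine add_le_add le_rfl ?_
        rw [lintegral_const_mul' _ _ (ENNReal.inv_ne_top.mpr hL0)]
        refine mul_le_mul_right ?_ _
        calc ∫⁻ w in S ∩ B, T.indicator h w
            ≤ ∫⁻ w in S, T.indicator h w :=
              lintegral_mono' (Measure.restrict_mono Set.inter_subset_left le_rfl) le_rfl
          _ ≤ ∫⁻ w in T, h w ∂(volume.restrict S) := lintegral_indicator_le _ _
          _ = ∫⁻ w in S ∩ T, h w := by
              rw [Measure.restrict_restrict' hS, Set.inter_comm]
          _ ≤ ε := hsupk

lemma measurable_image (φ : ℂ → ℂ) (hφ : DifferentiableOn ℂ φ UD) :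
    MeasurableSet (φ '' UD) := by
  have hconn : IsPreconnected UD := (convex_ball (0:ℂ) 1).isPreconnected
  rcases (hφ.analyticOnNhd isOpen_UD).is_constant_or_isOpen hconn with ⟨v, hv⟩ | hopen
  · have : φ '' UD = {v} := by
      apply Set.Subset.antisymm
      · rintro _ ⟨w, hw, rfl⟩; exact hv w hw
      · rintro x hx
        rw [Set.mem_singleton_iff] at hx
        exact ⟨0, by simp [UD], by rw [hx]; exact hv 0 (by simp [UD])⟩
    rw [this]; exact measurableSet_singleton v
  · exact (hopen UD Set.Subset.rfl isOpen_UD).measurableSet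

lemma exists_unit_id :
    ∃ g : ℂ → ℂ, DifferentiableOn ℂ g UD ∧ Dnorm2 g = 1 ∧
      ∀ w ∈ UD, (‖deriv g w‖₊ : ℝ≥0∞) ^ 2 = ENNReal.ofReal Real.pi⁻¹ := by
  have hid : DifferentiableOn ℂ (fun w : ℂ => w) UD := differentiable_id.differentiableOn
  have hderiv : ∀ w : ℂ, deriv (fun w : ℂ => w) w = 1 := fun w => deriv_id w
  have hDn : Dnorm2 (fun w : ℂ => w) = (NNReal.pi : ℝ≥0∞) := by
    rw [Dnorm2]
    simp only [hderiv]
    rw [setLIntegral_const]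
    simp [volume_UD]
  have hpi0 : (NNReal.pi : ℝ≥0∞) ≠ 0 := by
    simp [NNReal.pi_ne_zero]
  have hpit : (NNReal.pi : ℝ≥0∞) ≠ ⊤ := ENNReal.coe_ne_top
  obtain ⟨g, hg1, hg2, hg3⟩ := normalizeFn (fun w : ℂ => w) hid (by rw [hDn]; exact hpi0)
    (by rw [hDn]; exact hpit)
  refine ⟨g, hg1, hg2, fun w hw => ?_⟩
  rw [hg3 w hw, hDn, hderiv]
  have h1 : (‖(1:ℂ)‖₊ : ℝ≥0∞) ^ 2 = 1 := by simp
  rw [h1, mul_one]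
  rw [← ofReal_pi_eq, ← ENNReal.ofReal_inv_of_pos Real.pi_pos]

lemma exists_unit_tf {z : ℂ} (hz : z ∈ UD) (ha : 1/2 ≤ Complex.abs z) {r : ℝ} (hr : 0 < r) :
    ∃ g : ℂ → ℂ, DifferentiableOn ℂ g UD ∧ Dnorm2 g = 1 ∧
      ∀ w ∈ bergmanBall z r,
        ENNReal.ofReal ((1 - sOf r) ^ 4 / (348 * Real.pi * (1 - Complex.abs z ^ 2) ^ 2))
          ≤ (‖deriv g w‖₊ : ℝ≥0∞) ^ 2 := by
  set a := Complex.abs z with hadef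
  have ha1 : a < 1 := mem_UD.mp hz
  have ha2 : 0 < 1 - a ^ 2 := by nlinarith
  have hs0 : 0 < sOf r := sOf_pos hr
  have hs1 : sOf r < 1 := sOf_lt_one hr
  have h0 : Dnorm2 (tf z) ≠ 0 := by
    intro h
    have := tf_norm_lower (z := z)
    rw [h] at this
    simp at this
  have hub := tf_norm_bound hz ha
  have htop : Dnorm2 (tf z) ≠ ⊤ :=
    ne_top_of_le_ne_top ENNReal.ofReal_ne_top hub
  obtain ⟨g, hg1, hg2, hg3⟩ := normalizeFn (tf z) (tf_differentiableOn hz) h0 htop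
  refine ⟨g, hg1, hg2, fun w hw => ?_⟩
  have hwUD : w ∈ UD := bergmanBall_subset_UD hw
  rw [hg3 w hwUD]
  have hA : ENNReal.ofReal ((1 - a ^ 2) ^ 2 / (87 * Real.pi)) ≤ (Dnorm2 (tf z))⁻¹ := by
    refine le_trans ?_ (ENNReal.inv_le_inv' hub)
    rw [← ENNReal.ofReal_inv_of_pos (by positivity)]
    refine ENNReal.ofReal_le_ofReal ?_
    rw [inv_div]
  have hB := tf_deriv_lower hz hr ha hw
  calc ENNReal.ofReal ((1 - sOf r) ^ 4 / (348 * Real.pi * (1 - a ^ 2) ^ 2))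
      = ENNReal.ofReal ((1 - a ^ 2) ^ 2 / (87 * Real.pi)
          * ((1 - sOf r) ^ 4 / (4 * (1 - a ^ 2) ^ 4))) := by
        congr 1
        field_simp
        ring
    _ = ENNReal.ofReal ((1 - a ^ 2) ^ 2 / (87 * Real.pi))
          * ENNReal.ofReal ((1 - sOf r) ^ 4 / (4 * (1 - a ^ 2) ^ 4)) := by
        rw [ENNReal.ofReal_mul (by positivity)]
    _ ≤ (Dnorm2 (tf z))⁻¹ * (‖deriv (tf z) w‖₊ : ℝ≥0∞) ^ 2 := mul_le_mul' hA hB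


/-- if C_φ is bounded on the Dirichlet space, the tails
sup_{‖f‖=1} ∫_{φ(𝔻)∩{n_φ>k}} |f'|² n_φ dA tend to 0, and n_φ dA is a reverse Carleson
measure, then the area condition A(φ(𝔻)∩D(z,r)) ≥ δ'·A(D(z,r)) holds for some δ' > 0. -/
theorem stmt14 (φ : ℂ → ℂ) (hφ : DifferentiableOn ℂ φ UD) (hmaps : MapsTo φ UD UD)
    (M : ℝ) (hM : 0 < M)
    (hbdd : ∀ f : ℂ → ℂ, DifferentiableOn ℂ f UD →
      Dnorm2 (f ∘ φ) ≤ ENNReal.ofReal M * Dnorm2 f)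
    (hsup : Tendsto (fun k : ℕ =>
      ⨆ (f : ℂ → ℂ) (_ : DifferentiableOn ℂ f UD ∧ Dnorm2 f = 1),
        ∫⁻ w in φ '' UD ∩ {w | k < countFn φ w},
          (‖deriv f w‖₊ : ℝ≥0∞) ^ 2 * (countFn φ w : ℝ≥0∞)) atTop (nhds 0))
    (δ r : ℝ) (hδ : 0 < δ) (hr : 0 < r)
    (hrc : ∀ z ∈ UD, ENNReal.ofReal δ * volume (bergmanBall z r)
      ≤ ∫⁻ w in φ '' UD ∩ bergmanBall z r, (countFn φ w : ℝ≥0∞)) :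
    ∃ δ' : ℝ, 0 < δ' ∧ ∀ z ∈ UD,
      ENNReal.ofReal δ' * volume (bergmanBall z r) ≤ volume (φ '' UD ∩ bergmanBall z r) := by
  have hS : MeasurableSet (φ '' UD) := measurable_image φ hφ
  have hs0 : 0 < sOf r := sOf_pos hr
  have hs1 : sOf r < 1 := sOf_lt_one hr
  have hs1' : (0:ℝ) < 1 - sOf r := by linarith
  set εr : ℝ := δ * sOf r ^ 2 * (1 - sOf r) ^ 4 / 20000 with hεrdef
  have hεr0 : 0 < εr := by positivity
  obtain ⟨k₀, hk₀⟩ := (ENNReal.tendsto_atTop_zero.mp hsup) (ENNReal.ofReal εr)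
    (ENNReal.ofReal_pos.mpr hεr0)
  set k := max k₀ 1 with hkdef
  have hk := hk₀ k (le_max_left _ _)
  have hk1 : 1 ≤ k := le_max_right _ _
  have hkR : (0:ℝ) < (k : ℝ) := by exact_mod_cast Nat.lt_of_lt_of_le Nat.zero_lt_one hk1
  refine ⟨δ / (2 * k), by positivity, ?_⟩
  intro z hz
  have hB : MeasurableSet (bergmanBall z r) := (isOpen_bergmanBall hz hr).measurableSet
  have hv_top : volume (bergmanBall z r) ≠ ⊤ := volume_bergmanBall_lt_top.ne
  have key : ENNReal.ofReal (δ/2) * volume (bergmanBall z r)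
      ≤ (k : ℝ≥0∞) * volume (φ '' UD ∩ bergmanBall z r) := by
    obtain ⟨Lr, hLr0, g, hg1, hg2, hLg, hLε⟩ :
        ∃ Lr : ℝ, 0 < Lr ∧ ∃ g : ℂ → ℂ, DifferentiableOn ℂ g UD ∧ Dnorm2 g = 1 ∧
          (∀ w ∈ bergmanBall z r, ENNReal.ofReal Lr ≤ (‖deriv g w‖₊ : ℝ≥0∞) ^ 2) ∧
          Lr⁻¹ * εr ≤ δ/2 * (Real.pi * (sOf r / 2 * (1 - Complex.abs z)) ^ 2) := by
      rcases le_or_gt (1/2) (Complex.abs z) with ha | ha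
      · obtain ⟨g, h1, h2, h3⟩ := exists_unit_tf hz ha hr
        have ha1 : Complex.abs z < 1 := mem_UD.mp hz
        have ha0 : 0 ≤ Complex.abs z := Complex.abs.nonneg z
        have ha2 : 0 < 1 - Complex.abs z ^ 2 := by nlinarith
        refine ⟨(1 - sOf r) ^ 4 / (348 * Real.pi * (1 - Complex.abs z ^ 2) ^ 2),
          by positivity, g, h1, h2, h3, ?_⟩
        set a := Complex.abs z
        have e1 : ((1 - sOf r) ^ 4 / (348 * Real.pi * (1 - a ^ 2) ^ 2))⁻¹ * εr
            = 348 * Real.pi * δ * sOf r ^ 2 * (1 - a ^ 2) ^ 2 / 20000 := by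
          rw [hεrdef]
          field_simp
        have e2 : δ/2 * (Real.pi * (sOf r / 2 * (1 - a)) ^ 2)
            = Real.pi * δ * sOf r ^ 2 * (1 - a) ^ 2 / 8 := by ring
        rw [e1, e2]
        have h4 : (1 - a ^ 2) ^ 2 ≤ 4 * (1 - a) ^ 2 := by nlinarith
        have hcoef : (0:ℝ) ≤ Real.pi * δ * sOf r ^ 2 := by positivity
        nlinarith [mul_le_mul_of_nonneg_left h4 hcoef,
          mul_nonneg hcoef (sq_nonneg (1 - a))]
      · obtain ⟨g, h1, h2, h3⟩ := exists_unit_id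
        refine ⟨Real.pi⁻¹, by positivity, g, h1, h2,
          fun w hw => le_of_eq (h3 w (bergmanBall_subset_UD hw)).symm, ?_⟩
        set a := Complex.abs z
        have ha0 : 0 ≤ a := Complex.abs.nonneg z
        rw [inv_inv, hεrdef]
        have ht1 : (1 - sOf r) ^ 4 ≤ 1 := by
          apply pow_le_one₀ (by linarith) (by linarith)
        have h14 : (1:ℝ)/4 ≤ (1 - a) ^ 2 := by nlinarith
        have hcoef : (0:ℝ) ≤ Real.pi * δ * sOf r ^ 2 := by positivity
        have e2 : δ/2 * (Real.pi * (sOf r / 2 * (1 - a)) ^ 2)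
            = Real.pi * δ * sOf r ^ 2 * (1 - a) ^ 2 / 8 := by ring
        rw [e2]
        nlinarith [mul_le_mul_of_nonneg_left ht1 hcoef,
          mul_le_mul_of_nonneg_left h14 hcoef]
    have hLne0 : ENNReal.ofReal Lr ≠ 0 := (ENNReal.ofReal_pos.mpr hLr0).ne'
    have hsupk : ∫⁻ w in φ '' UD ∩ {w | k < countFn φ w},
        (‖deriv g w‖₊ : ℝ≥0∞) ^ 2 * (countFn φ w : ℝ≥0∞) ≤ ENNReal.ofReal εr :=
      le_trans (le_iSup₂ (f := fun (f : ℂ → ℂ)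
        (_ : DifferentiableOn ℂ f UD ∧ Dnorm2 f = 1) =>
        ∫⁻ w in φ '' UD ∩ {w | k < countFn φ w},
          (‖deriv f w‖₊ : ℝ≥0∞) ^ 2 * (countFn φ w : ℝ≥0∞)) g ⟨hg1, hg2⟩) hk
    have hms := main_step φ hS k g hB hLne0 ENNReal.ofReal_ne_top hLg hsupk
    have hLε' : (ENNReal.ofReal Lr)⁻¹ * ENNReal.ofReal εr
        ≤ ENNReal.ofReal (δ/2) * volume (bergmanBall z r) := by
      calc (ENNReal.ofReal Lr)⁻¹ * ENNReal.ofReal εr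
          = ENNReal.ofReal (Lr⁻¹ * εr) := by
            rw [← ENNReal.ofReal_inv_of_pos hLr0, ← ENNReal.ofReal_mul (by positivity)]
        _ ≤ ENNReal.ofReal (δ/2 * (Real.pi * (sOf r / 2 * (1 - Complex.abs z)) ^ 2)) :=
            ENNReal.ofReal_le_ofReal hLε
        _ = ENNReal.ofReal (δ/2) * ENNReal.ofReal
              (Real.pi * (sOf r / 2 * (1 - Complex.abs z)) ^ 2) :=
            ENNReal.ofReal_mul (by positivity)
        _ ≤ ENNReal.ofReal (δ/2) * volume (bergmanBall z r) :=
            mul_le_mul_right (volume_bergmanBall_ge hz hr) _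
    have h1 : ENNReal.ofReal δ * volume (bergmanBall z r)
        ≤ (k : ℝ≥0∞) * volume (φ '' UD ∩ bergmanBall z r)
          + ENNReal.ofReal (δ/2) * volume (bergmanBall z r) :=
      (hrc z hz).trans (hms.trans (add_le_add le_rfl hLε'))
    have hδsplit : ENNReal.ofReal δ = ENNReal.ofReal (δ/2) + ENNReal.ofReal (δ/2) := by
      rw [← ENNReal.ofReal_add (by linarith) (by linarith)]
      norm_num
    rw [hδsplit, add_mul] at h1
    exact (ENNReal.add_le_add_iff_right
      (ENNReal.mul_ne_top ENNReal.ofReal_ne_top hv_top)).mp h1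
  have hkne0 : ((k : ℕ) : ℝ≥0∞) ≠ 0 := Nat.cast_ne_zero.mpr (by omega)
  calc ENNReal.ofReal (δ / (2 * k)) * volume (bergmanBall z r)
      = ((k : ℕ) : ℝ≥0∞)⁻¹ * (ENNReal.ofReal (δ/2) * volume (bergmanBall z r)) := by
        rw [← mul_assoc]
        congr 1
        rw [← ENNReal.ofReal_natCast k, ← ENNReal.ofReal_inv_of_pos hkR,
          ← ENNReal.ofReal_mul (by positivity)]
        congr 1
        field_simp
    _ ≤ ((k : ℕ) : ℝ≥0∞)⁻¹ * ((k : ℝ≥0∞) * volume (φ '' UD ∩ bergmanBall z r)) :=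
        mul_le_mul_right key _
    _ = volume (φ '' UD ∩ bergmanBall z r) := by
        rw [← mul_assoc, ENNReal.inv_mul_cancel hkne0 (ENNReal.natCast_ne_top k), one_mul]
end
end

section
/- Let φ be holomorphic on a neighborhood of the closed unit disc with φ(𝔻) ⊆ 𝔻 and suppose 𝕋 ⊄ φ(closure(𝔻)). Then C_φ does not have closed range on the Dirichlet space: there exists a sequence f_k ∈ D(𝔻) with ‖C_φ f_k‖/‖f_k‖ → 0. -/
open MeasureTheory Metric Complex Filter Set
open scoped ENNReal NNReal

noncomputable section

/-- Strict peak lemma:|（1+ζ̄w)/2| < 1 for w in the closed disc, w ≠ ζ. -/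
lemma peak_lt_one (ζ w : ℂ) (hζ : ‖ζ‖ = 1) (hw : ‖w‖ ≤ 1) (hne : w ≠ ζ) :
    ‖(1 + (starRingEnd ℂ) ζ * w)/2‖ < 1 := by
  set c := (starRingEnd ℂ) ζ with hc
  by_contra h
  push_neg at h
  set u := c * w with hu
  have hcn : ‖c‖ = 1 := by simpa [hc] using hζ
  have hun : ‖u‖ ≤ 1 := by
    rw [hu, norm_mul, hcn, one_mul]; exact hw
  have h1 : u.re^2 + u.im^2 ≤ 1 := by
    have habs : ‖u‖ ≤ 1 := by exact hun
    nlinarith [Complex.sq_norm u, Complex.normSq_apply u, norm_nonneg u]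
  have h2 : (1 + u.re)^2 + u.im^2 ≥ 4 := by
    have h2' : (2:ℝ) ≤ ‖1 + u‖ := by
      have : ‖(1 + u)/2‖ = ‖1+u‖ / 2 := by
        rw [norm_div]; norm_num
      rw [this] at h; linarith
    have hre : (1+u).re = 1 + u.re := by simp
    have him : (1+u).im = u.im := by simp
    have key : ‖1+u‖^2 = (1+u.re)^2 + u.im^2 := by
      rw [Complex.sq_norm, Complex.normSq_apply, hre, him]; ring
    nlinarith [key, h2']
  have hre1 : u.re = 1 := by nlinarith
  have him0 : u.im = 0 := by nlinarith
  have hu1 : u = 1 := Complex.ext (by simp [hre1]) (by simp [him0])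
  have hcζ : c * ζ = 1 := by
    rw [hc, mul_comm, Complex.mul_conj]
    norm_cast
    rw [Complex.normSq_eq_norm_sq]
    simp [hζ]
  have h0' : c * (w - ζ) = 0 := by rw [mul_sub, hcζ, ← hu, hu1, sub_self]
  have hc0 : c ≠ 0 := by intro h0; rw [h0] at hcn; simp at hcn
  rcases mul_eq_zero.mp h0' with h' | h'
  · exact hc0 h'
  · exact hne (sub_eq_zero.mp h')

/-- nnnorm-squared vs ofReal of a bound. -/
lemma sqnn_le (x : ℂ) (b : ℝ) (h : ‖x‖ ≤ b) :
    (‖x‖₊ : ℝ≥0∞)^2 ≤ ENNReal.ofReal (b^2) := by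
  rw [← ENNReal.ofReal_coe_nnreal, coe_nnnorm, ← ENNReal.ofReal_pow (norm_nonneg x)]
  exact ENNReal.ofReal_le_ofReal (by nlinarith [norm_nonneg x])

lemma le_sqnn (x : ℂ) (b : ℝ) (hb : 0 ≤ b) (h : b ≤ ‖x‖) :
    ENNReal.ofReal (b^2) ≤ (‖x‖₊ : ℝ≥0∞)^2 := by
  rw [← ENNReal.ofReal_coe_nnreal, coe_nnnorm, ← ENNReal.ofReal_pow (norm_nonneg x)]
  exact ENNReal.ofReal_le_ofReal (by nlinarith)

set_option maxHeartbeats 1000000 in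
/-- if φ is holomorphic on a neighborhood of the closed disc, maps 𝔻 into 𝔻,
and 𝕋 ⊄ φ(closure 𝔻), then C_φ is not bounded below: there are f_k in the Dirichlet space
with ‖C_φ f_k‖²/‖f_k‖² → 0; hence C_φ does not have closed range. -/
theorem stmt17 (φ : ℂ → ℂ) (U : Set ℂ) (hU : IsOpen U) (hclU : closure UD ⊆ U)
    (hφ : DifferentiableOn ℂ φ U) (hmaps : MapsTo φ UD UD)
    (hT : ¬ Metric.sphere (0 : ℂ) 1 ⊆ φ '' closure UD) :
    ∃ f : ℕ → ℂ → ℂ, (∀ k, DifferentiableOn ℂ (f k) UD) ∧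
      (∀ k, Dnorm2 (f k) ≠ 0) ∧ (∀ k, Dnorm2 (f k) ≠ ⊤) ∧
      Tendsto (fun k => (Dnorm2 (f k ∘ φ)).toReal / (Dnorm2 (f k)).toReal)
        atTop (nhds 0) := by
  classical
  obtain ⟨ζ, hζs, hζn⟩ := not_subset.mp hT
  have hζ1 : ‖ζ‖ = 1 := mem_sphere_zero_iff_norm.mp hζs
  set c : ℂ := (starRingEnd ℂ) ζ with hc
  have hc1 : ‖c‖ = 1 := by simpa [hc] using hζ1
  have hcζ : c * ζ = 1 := by
    rw [hc, mul_comm, Complex.mul_conj]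
    norm_cast
    rw [Complex.normSq_eq_norm_sq]
    simp [hζ1]
  have hclo : closure UD = closedBall (0:ℂ) 1 := closure_ball 0 one_ne_zero
  have hUDsub : UD ⊆ closedBall (0:ℂ) 1 := ball_subset_closedBall
  have hUDmeas : MeasurableSet UD := measurableSet_ball
  have hUDvol : volume UD < ⊤ := measure_ball_lt_top
  -- the peak function and its powers
  set g : ℂ → ℂ := fun z => (1 + c*z)/2 with hgdef
  set F : ℕ → ℂ → ℂ := fun k z => (g z)^(k+1) with hFdef
  have hgcont : Continuous g := by fun_prop
  have hg_le : ∀ z : ℂ, ‖z‖ ≤ 1 → ‖g z‖ ≤ 1 := by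
    intro z hz
    have : ‖1 + c*z‖ ≤ 2 := by
      calc ‖1 + c*z‖ ≤ ‖(1:ℂ)‖ + ‖c*z‖ := norm_add_le _ _
        _ ≤ 1 + 1 := by rw [norm_one, norm_mul, hc1, one_mul]; linarith
        _ = 2 := by norm_num
    rw [hgdef]
    simp only [norm_div]
    rw [show ‖(2:ℂ)‖ = 2 by norm_num]
    linarith
  -- derivative facts
  have hgd : ∀ z : ℂ, HasDerivAt g (c/2) z := by
    intro z
    have h1 : HasDerivAt (fun z : ℂ => 1 + c*z) c z := by
      simpa using ((hasDerivAt_id z).const_mul c).const_add 1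
    simpa using h1.div_const 2
  have hFd : ∀ (k : ℕ) (z : ℂ), HasDerivAt (F k) (((k:ℂ)+1) * (g z)^k * (c/2)) z := by
    intro k z
    have := (hgd z).fun_pow (k+1)
    simpa [Nat.add_sub_cancel] using this
  have hFderiv : ∀ (k : ℕ) (z : ℂ), deriv (F k) z = ((k:ℂ)+1) * (g z)^k * (c/2) :=
    fun k z => (hFd k z).deriv
  have hFnorm : ∀ (k : ℕ) (z : ℂ), ‖deriv (F k) z‖ = ((k:ℝ)+1) * ‖g z‖^k / 2 := by
    intro k z
    have hck : ‖c/2‖ = 1/2 := by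
      rw [norm_div, hc1]; norm_num
    have hk1 : ‖((k:ℂ)+1)‖ = (k:ℝ)+1 := by
      rw [show ((k:ℂ)+1) = ((k+1:ℕ):ℂ) by push_cast; ring, Complex.norm_natCast]
      push_cast; ring
    rw [hFderiv k z, norm_mul, norm_mul, norm_pow, hck, hk1]
    ring
  -- φ maps the closed disc into itself
  have hφcont : ContinuousOn φ (closure UD) := hφ.continuousOn.mono hclU
  have hφK : ∀ z ∈ closedBall (0:ℂ) 1, φ z ∈ closedBall (0:ℂ) 1 := by
    intro z hz
    have h1 : φ '' closure UD ⊆ closure (φ '' UD) := hφcont.image_closure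
    have h2 : closure (φ '' UD) ⊆ closure UD := closure_mono (hmaps.image_subset)
    have : φ z ∈ closure UD := h2 (h1 ⟨z, by rw [hclo]; exact hz, rfl⟩)
    rwa [hclo] at this
  -- r = max of ‖g (φ z)‖ on closed disc, r < 1
  have hKcomp : IsCompact (closedBall (0:ℂ) 1) := isCompact_closedBall 0 1
  have hKne : (closedBall (0:ℂ) 1).Nonempty := ⟨0, by simp⟩
  have hψcont : ContinuousOn (fun z => ‖g (φ z)‖) (closedBall (0:ℂ) 1) := by
    apply ContinuousOn.norm
    exact hgcont.comp_continuousOn (by rwa [hclo] at hφcont)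
  obtain ⟨z0, hz0K, hz0max⟩ := hKcomp.exists_isMaxOn hKne hψcont
  set r : ℝ := ‖g (φ z0)‖ with hrdef
  have hr0 : 0 ≤ r := norm_nonneg _
  have hrle : ∀ z ∈ closedBall (0:ℂ) 1, ‖g (φ z)‖ ≤ r := fun z hz => hz0max hz
  have hr1 : r < 1 := by
    apply peak_lt_one ζ (φ z0) hζ1 (by simpa using hφK z0 hz0K)
    intro heq
    exact hζn ⟨z0, by rw [hclo]; exact hz0K, heq⟩
  -- M = max of ‖deriv φ‖ on closed disc
  have hφan : AnalyticOnNhd ℂ φ U := hφ.analyticOnNhd hU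
  have hdφcont : ContinuousOn (fun z => ‖deriv φ z‖) (closedBall (0:ℂ) 1) := by
    apply ContinuousOn.norm
    apply (hφan.deriv.continuousOn).mono
    rw [← hclo]; exact hclU
  obtain ⟨z1, hz1K, hz1max⟩ := hKcomp.exists_isMaxOn hKne hdφcont
  set M : ℝ := ‖deriv φ z1‖ with hMdef
  have hM0 : 0 ≤ M := norm_nonneg _
  have hMle : ∀ z ∈ closedBall (0:ℂ) 1, ‖deriv φ z‖ ≤ M := fun z hz => hz1max hz
  -- s and the set E
  set s : ℝ := (r+1)/2 with hsdef
  have hrs : r < s := by rw [hsdef]; linarith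
  have hs1 : s < 1 := by rw [hsdef]; linarith
  have hs0 : 0 < s := by rw [hsdef]; linarith
  set E : Set ℂ := UD ∩ {z | s < ‖g z‖} with hEdef
  have hEopen : IsOpen E := isOpen_ball.inter (isOpen_lt continuous_const hgcont.norm)
  have hEne : E.Nonempty := by
    refine ⟨(s:ℂ) * ζ, ?_, ?_⟩
    · simp only [UD, mem_ball, dist_zero_right, norm_mul, hζ1, mul_one]
      rw [Complex.norm_real, Real.norm_eq_abs, abs_of_pos hs0]; exact hs1
    · have : g ((s:ℂ)*ζ) = ((1+s:ℝ):ℂ)/2 := by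
        rw [hgdef]
        simp only []
        rw [show c * ((s:ℂ)*ζ) = (s:ℂ) * (c*ζ) by ring, hcζ]
        push_cast; ring
      simp only [mem_setOf_eq, this]
      rw [norm_div, Complex.norm_real, Real.norm_eq_abs, show ‖(2:ℂ)‖ = 2 by norm_num]
      rw [abs_of_pos (by linarith)]
      linarith
  have hEsub : E ⊆ UD := inter_subset_left
  have hEmeas : MeasurableSet E := hEopen.measurableSet
  set a : ℝ := (volume E).toReal with hadef
  have hapos : 0 < a := by
    rw [hadef]
    apply ENNReal.toReal_pos
    · exact (hEopen.measure_pos volume hEne).ne'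
    · exact ((measure_mono hEsub).trans_lt hUDvol).ne
  set A : ℝ := (volume UD).toReal with hAdef
  have hA0 : 0 ≤ A := ENNReal.toReal_nonneg
  -- bounds on g
  have hgUD : ∀ z ∈ UD, ‖g z‖ ≤ 1 := fun z hz => hg_le z (by
    have := hUDsub hz; simpa using this)
  -- finiteness
  have hintle : ∀ k : ℕ, (∫⁻ z in UD, (‖deriv (F k) z‖₊ : ℝ≥0∞)^2)
      ≤ ENNReal.ofReal ((((k:ℝ)+1)/2)^2) * volume UD := by
    intro k
    calc ∫⁻ z in UD, (‖deriv (F k) z‖₊ : ℝ≥0∞)^2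
        ≤ ∫⁻ _ in UD, ENNReal.ofReal ((((k:ℝ)+1)/2)^2) := by
          apply setLIntegral_mono' hUDmeas
          intro z hz
          apply sqnn_le
          rw [hFnorm k z]
          have h1 : ‖g z‖^k ≤ 1 := pow_le_one₀ (norm_nonneg _) (hgUD z hz)
          have h2 : (0:ℝ) ≤ (k:ℝ)+1 := by positivity
          calc ((k:ℝ)+1) * ‖g z‖^k / 2 ≤ ((k:ℝ)+1) * 1 / 2 := by
                apply div_le_div_of_nonneg_right ?_ (by norm_num)
                · exact mul_le_mul_of_nonneg_left h1 h2
            _ = ((k:ℝ)+1)/2 := by ring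
      _ = ENNReal.ofReal ((((k:ℝ)+1)/2)^2) * volume UD := setLIntegral_const _ _
  have hfin : ∀ k, Dnorm2 (F k) ≠ ⊤ := by
    intro k
    rw [Dnorm2]
    apply ENNReal.add_ne_top.mpr
    constructor
    · exact (ENNReal.pow_ne_top ENNReal.coe_ne_top)
    · exact ((hintle k).trans_lt (ENNReal.mul_lt_top ENNReal.ofReal_lt_top hUDvol)).ne
  have hnz : ∀ k, Dnorm2 (F k) ≠ 0 := by
    intro k
    rw [Dnorm2]
    intro h
    rw [add_eq_zero] at h
    have h1 := h.1
    rw [pow_eq_zero_iff (by norm_num)] at h1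
    rw [ENNReal.coe_eq_zero, nnnorm_eq_zero] at h1
    have : F k 0 = (2⁻¹ : ℂ)^(k+1) := by
      simp [hFdef, hgdef]
    rw [this] at h1
    exact pow_ne_zero _ (by norm_num) h1
  -- diff
  have hdiff : ∀ k, DifferentiableOn ℂ (F k) UD :=
    fun k z _ => (hFd k z).differentiableAt.differentiableWithinAt
  -- derivative of composition on UD
  have hφdz : ∀ z ∈ UD, HasDerivAt φ (deriv φ z) z := by
    intro z hz
    exact (hφ.differentiableAt (hU.mem_nhds (hclU (subset_closure hz)))).hasDerivAt
  have hcompd : ∀ (k : ℕ) (z : ℂ), z ∈ UD →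
      deriv (F k ∘ φ) z = (((k:ℂ)+1) * (g (φ z))^k * (c/2)) * deriv φ z := by
    intro k z hz
    exact ((hFd k (φ z)).comp z (hφdz z hz)).deriv
  -- numerator bound
  set B : ℝ := 1 + M^2 * A / 4 with hBdef
  have hB0 : 0 < B := by positivity
  have hnum : ∀ k : ℕ,
      (Dnorm2 (F k ∘ φ)).toReal ≤ ((k:ℝ)+1)^2 * (r^k)^2 * B := by
    intro k
    have hb1 : ‖(F k ∘ φ) 0‖ ≤ r^(k+1) := by
      simp only [Function.comp_apply, hFdef]
      rw [norm_pow]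
      exact pow_le_pow_left₀ (norm_nonneg _) (hrle 0 (by simp)) _
    have hb2 : ∀ z ∈ UD, ‖deriv (F k ∘ φ) z‖ ≤ ((k:ℝ)+1) * r^k / 2 * M := by
      intro z hz
      have hck : ‖c/2‖ = 1/2 := by
        rw [norm_div, hc1]; norm_num
      have hk1 : ‖((k:ℂ)+1)‖ = (k:ℝ)+1 := by
        rw [show ((k:ℂ)+1) = ((k+1:ℕ):ℂ) by push_cast; ring, Complex.norm_natCast]
        push_cast; ring
      rw [hcompd k z hz, norm_mul, norm_mul, norm_mul, norm_pow, hck, hk1]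
      have h1 : ‖g (φ z)‖^k ≤ r^k := pow_le_pow_left₀ (norm_nonneg _) (hrle z (hUDsub hz)) _
      have h2 : ‖deriv φ z‖ ≤ M := hMle z (hUDsub hz)
      have h3 : (0:ℝ) ≤ ‖g (φ z)‖^k := by positivity
      have h4 : (0:ℝ) ≤ r^k := by positivity
      calc ((k:ℝ)+1) * ‖g (φ z)‖^k * (1/2) * ‖deriv φ z‖
          ≤ ((k:ℝ)+1) * r^k * (1/2) * M := by
            apply mul_le_mul ?_ h2 (norm_nonneg _) (by positivity)
            apply mul_le_mul_of_nonneg_right ?_ (by norm_num)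
            exact mul_le_mul_of_nonneg_left h1 (by positivity)
        _ = ((k:ℝ)+1) * r^k / 2 * M := by ring
    have hDle : Dnorm2 (F k ∘ φ) ≤ ENNReal.ofReal ((r^(k+1))^2)
        + ENNReal.ofReal ((((k:ℝ)+1) * r^k / 2 * M)^2) * volume UD := by
      rw [Dnorm2]
      apply add_le_add
      · exact sqnn_le _ _ hb1
      · calc ∫⁻ z in UD, (‖deriv (F k ∘ φ) z‖₊ : ℝ≥0∞)^2
            ≤ ∫⁻ _ in UD, ENNReal.ofReal ((((k:ℝ)+1) * r^k / 2 * M)^2) :=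
              setLIntegral_mono' hUDmeas (fun z hz => sqnn_le _ _ (hb2 z hz))
          _ = _ := setLIntegral_const _ _
    have hRHSne : (ENNReal.ofReal ((r^(k+1))^2)
        + ENNReal.ofReal ((((k:ℝ)+1) * r^k / 2 * M)^2) * volume UD) ≠ ⊤ := by
      apply ENNReal.add_ne_top.mpr
      exact ⟨ENNReal.ofReal_ne_top,
        (ENNReal.mul_lt_top ENNReal.ofReal_lt_top hUDvol).ne⟩
    calc (Dnorm2 (F k ∘ φ)).toReal
        ≤ (ENNReal.ofReal ((r^(k+1))^2)
          + ENNReal.ofReal ((((k:ℝ)+1) * r^k / 2 * M)^2) * volume UD).toReal :=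
          ENNReal.toReal_mono hRHSne hDle
      _ = (r^(k+1))^2 + (((k:ℝ)+1) * r^k / 2 * M)^2 * A := by
          rw [ENNReal.toReal_add ENNReal.ofReal_ne_top
            (ENNReal.mul_lt_top ENNReal.ofReal_lt_top hUDvol).ne,
            ENNReal.toReal_mul, ENNReal.toReal_ofReal (by positivity),
            ENNReal.toReal_ofReal (by positivity), hAdef]
      _ ≤ ((k:ℝ)+1)^2 * (r^k)^2 * B := by
          rw [hBdef]
          have h1 : (r^(k+1))^2 ≤ (r^k)^2 := by
            apply pow_le_pow_left₀ (by positivity)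
            calc r^(k+1) = r^k * r := by ring
              _ ≤ r^k * 1 := by
                  apply mul_le_mul_of_nonneg_left (le_of_lt hr1) (by positivity)
              _ = r^k := by ring
          have h2 : (1:ℝ) ≤ ((k:ℝ)+1)^2 := by nlinarith [Nat.cast_nonneg (α := ℝ) k]
          nlinarith [sq_nonneg (r^k), sq_nonneg ((k:ℝ)+1), hM0, hA0,
            mul_nonneg (mul_nonneg hM0 hM0) hA0]
  -- denominator lower bound
  have hden : ∀ k : ℕ,
      ((k:ℝ)+1)^2 * (s^k)^2 / 4 * a ≤ (Dnorm2 (F k)).toReal := by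
    intro k
    have hlow : ENNReal.ofReal ((((k:ℝ)+1) * s^k / 2)^2) * volume E
        ≤ Dnorm2 (F k) := by
      rw [Dnorm2]
      calc ENNReal.ofReal ((((k:ℝ)+1) * s^k / 2)^2) * volume E
          = ∫⁻ _ in E, ENNReal.ofReal ((((k:ℝ)+1) * s^k / 2)^2) :=
            (setLIntegral_const _ _).symm
        _ ≤ ∫⁻ z in E, (‖deriv (F k) z‖₊ : ℝ≥0∞)^2 := by
            apply setLIntegral_mono' hEmeas
            intro z hz
            apply le_sqnn _ _ (by positivity)
            rw [hFnorm k z]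
            have h1 : s^k ≤ ‖g z‖^k := pow_le_pow_left₀ (le_of_lt hs0) (le_of_lt hz.2) _
            have : ((k:ℝ)+1) * s^k ≤ ((k:ℝ)+1) * ‖g z‖^k :=
              mul_le_mul_of_nonneg_left h1 (by positivity)
            linarith
        _ ≤ ∫⁻ z in UD, (‖deriv (F k) z‖₊ : ℝ≥0∞)^2 := lintegral_mono_set hEsub
        _ ≤ (‖F k 0‖₊ : ℝ≥0∞)^2 + ∫⁻ z in UD, (‖deriv (F k) z‖₊ : ℝ≥0∞)^2 :=
            le_add_self
    have := ENNReal.toReal_mono (hfin k) hlow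
    calc ((k:ℝ)+1)^2 * (s^k)^2 / 4 * a
        = (((k:ℝ)+1) * s^k / 2)^2 * a := by ring
      _ = (ENNReal.ofReal ((((k:ℝ)+1) * s^k / 2)^2) * volume E).toReal := by
          rw [ENNReal.toReal_mul, ENNReal.toReal_ofReal (by positivity), hadef]
      _ ≤ (Dnorm2 (F k)).toReal := this
  -- the ratio bound and squeeze
  set q : ℝ := (r/s)^2 with hqdef
  have hq0 : 0 ≤ q := sq_nonneg _
  have hq1 : q < 1 := by
    rw [hqdef]
    have : r/s < 1 := (div_lt_one hs0).mpr hrs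
    have h0 : 0 ≤ r/s := div_nonneg hr0 (le_of_lt hs0)
    nlinarith
  set C : ℝ := 4*B/a with hCdef
  have hratio : ∀ k : ℕ,
      (Dnorm2 (F k ∘ φ)).toReal / (Dnorm2 (F k)).toReal ≤ C * q^k := by
    intro k
    have hdpos : 0 < (Dnorm2 (F k)).toReal := by
      have := hden k
      have h0 : 0 < ((k:ℝ)+1)^2 * (s^k)^2 / 4 * a := by positivity
      linarith
    rw [div_le_iff₀ hdpos]
    have hqk : q^k = (r^k)^2 / (s^k)^2 := by
      rw [hqdef, ← pow_mul, mul_comm 2 k, pow_mul, div_pow, div_pow]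
    have hck : C * q^k * (((k:ℝ)+1)^2 * (s^k)^2 / 4 * a)
        = ((k:ℝ)+1)^2 * (r^k)^2 * B := by
      rw [hCdef, hqk]
      have hsk : (s^k)^2 ≠ 0 := by positivity
      field_simp
    calc (Dnorm2 (F k ∘ φ)).toReal ≤ ((k:ℝ)+1)^2 * (r^k)^2 * B := hnum k
      _ = C * q^k * (((k:ℝ)+1)^2 * (s^k)^2 / 4 * a) := hck.symm
      _ ≤ C * q^k * (Dnorm2 (F k)).toReal := by
          apply mul_le_mul_of_nonneg_left (hden k)
          have : 0 ≤ C := by positivity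
          positivity
  refine ⟨F, hdiff, hnz, hfin, ?_⟩
  have htend : Tendsto (fun k : ℕ => C * q^k) atTop (nhds 0) := by
    have := (tendsto_pow_atTop_nhds_zero_of_lt_one hq0 hq1).const_mul C
    simpa using this
  apply squeeze_zero (fun k => div_nonneg ENNReal.toReal_nonneg ENNReal.toReal_nonneg)
    hratio htend
end
end

section
/- Let φ : 𝔻 → 𝔻 be a holomorphic injection (so n_φ ≤ 1) whose image is Ω = 𝔻 ∖ closure(𝔻_ζ), where 𝔻_ζ is an open disc internally tangent to 𝕋 at ζ ∈ 𝕋. Then the area condition fails: there is no pair δ > 0, r > 0 with A(φ(𝔻) ∩ D(z,r)) ≥ δ·A(D(z,r)) for all z ∈ 𝔻. In particular, for z → ζ radially inside 𝔻_ζ, the ratio A(Ω ∩ D(z,r))/A(D(z,r)) → 0. -/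
open MeasureTheory Metric Complex Filter Set
open scoped ENNReal NNReal

noncomputable section

lemma mem_UD_iff (w : ℂ) : w ∈ UD ↔ ‖w‖ < 1 := by
  simp [UD, Metric.mem_ball, Complex.dist_eq]


lemma ball_subset_bergman (z : ℂ) (r : ℝ) (hr : 0 < r) (hz : ‖z‖ < 1) :
    Metric.ball z (min (1/4) (r/4) * (1 - ‖z‖)) ⊆ bergmanBall z r := by
  intro w hw
  set c := min (1/4) (r/4) with hc
  have hc0 : 0 < c := lt_min (by norm_num) (by linarith)
  have hc1 : c ≤ 1/4 := min_le_left _ _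
  have hc2 : c ≤ r/4 := min_le_right _ _
  have hz0 : 0 ≤ ‖z‖ := norm_nonneg z
  have h1z : 0 < 1 - ‖z‖ := by linarith
  rw [Metric.mem_ball, Complex.dist_eq] at hw
  have htri : ‖w‖ ≤ ‖z‖ + ‖(w - z)‖ := by
    calc ‖w‖ = ‖(z + (w - z))‖ := by ring_nf
    _ ≤ ‖z‖ + ‖(w - z)‖ := norm_add_le _ _
  have habsw : ‖w‖ < 1 := by nlinarith
  have hden : 1 - ‖z‖ ≤ ‖(1 - (starRingEnd ℂ) z * w)‖ := by
    have h2 : ‖((starRingEnd ℂ) z * w)‖ = ‖z‖ * ‖w‖ := by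
      rw [norm_mul, Complex.norm_conj]
    have h3 : ‖(1:ℂ)‖ - ‖((starRingEnd ℂ) z * w)‖
        ≤ ‖(1 - (starRingEnd ℂ) z * w)‖ := by
      have := abs_norm_sub_norm_le 1 ((starRingEnd ℂ) z * w)
      calc ‖(1:ℂ)‖ - ‖((starRingEnd ℂ) z * w)‖
          ≤ |‖(1:ℂ)‖ - ‖((starRingEnd ℂ) z * w)‖| := le_abs_self _
        _ ≤ _ := this
    rw [norm_one, h2] at h3
    nlinarith [norm_nonneg w]
  have hrho : rho z w < c := by
    rw [rho, norm_div]
    rw [div_lt_iff₀ (by linarith)]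
    have : ‖(z - w)‖ < c * (1 - ‖z‖) := by
      rw [show z - w = -(w - z) by ring, norm_neg]; exact hw
    calc ‖(z - w)‖ < c * (1 - ‖z‖) := this
      _ ≤ c * ‖(1 - (starRingEnd ℂ) z * w)‖ := by
          exact mul_le_mul_of_nonneg_left hden hc0.le
  have hρ0 : 0 ≤ rho z w := norm_nonneg _
  constructor
  · exact (mem_UD_iff w).2 habsw
  · have hρlt : rho z w < 1/4 := lt_of_lt_of_le hrho hc1
    set ρ := rho z w
    have hXpos : 0 < (1 + ρ) / (1 - ρ) := by
      apply div_pos <;> linarith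
    have hlog : Real.log ((1 + ρ) / (1 - ρ)) ≤ (1 + ρ) / (1 - ρ) - 1 :=
      Real.log_le_sub_one_of_pos hXpos
    have hX : (1 + ρ) / (1 - ρ) ≤ 1 + 4 * ρ := by
      rw [div_le_iff₀ (by linarith)]
      nlinarith
    have : Real.log ((1 + ρ) / (1 - ρ)) ≤ 4 * ρ := by linarith
    nlinarith

lemma bergman_subset_closedBall (z : ℂ) (r : ℝ) (hr : 0 < r) (hz : ‖z‖ < 1) :
    bergmanBall z r ⊆ Metric.closedBall z ((Real.exp (2*r) - 1) * (1 - ‖z‖)) := by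
  intro w hw
  obtain ⟨hw1, hw2⟩ := hw
  rw [mem_UD_iff] at hw1
  set A := ‖z‖ with hA
  set d := ‖(z - w)‖ with hd
  set B := ‖(1 - (starRingEnd ℂ) z * w)‖ with hB
  clear_value A d B
  have hA0 : 0 ≤ A := hA ▸ norm_nonneg z
  have hd0 : 0 ≤ d := hd ▸ norm_nonneg _
  have hB0 : 0 ≤ B := hB ▸ norm_nonneg _
  -- d < B
  have hsq : B^2 - d^2 = (1 - A^2) * (1 - ‖w‖^2) := by
    rw [hB, hd, hA, Complex.sq_norm, Complex.sq_norm, Complex.sq_norm, Complex.sq_norm]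
    exact normSq_identity z w
  have f1 : 0 < 1 - A^2 := by nlinarith
  have f2 : 0 < 1 - ‖w‖^2 := by nlinarith [norm_nonneg w]
  have hpos : 0 < B^2 - d^2 := by rw [hsq]; exact mul_pos f1 f2
  have hdB : d < B := by
    by_contra h
    push_neg at h
    nlinarith [mul_nonneg (sub_nonneg.2 h) (add_nonneg hd0 hB0)]
  have hBpos : 0 < B := lt_of_le_of_lt hd0 hdB
  -- rho = d / B
  have hrho : rho z w = d / B := by rw [rho, norm_div, ← hd, ← hB]
  have hρ0' : 0 ≤ rho z w := norm_nonneg _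
  set ρ := rho z w with hρ
  clear_value ρ
  have hρ0 : 0 ≤ ρ := hρ0'
  have hρ1 : ρ < 1 := by rw [hrho]; rw [div_lt_one hBpos]; exact hdB
  -- from log bound
  set E := Real.exp (2*r) with hE
  clear_value E
  have hE1 : 1 < E := by
    have := Real.exp_lt_exp.mpr (show (0:ℝ) < 2*r by linarith)
    rw [Real.exp_zero] at this
    rw [hE]; exact this
  have hXpos : 0 < (1 + ρ) / (1 - ρ) := div_pos (by linarith) (by linarith)
  have hlogX : Real.log ((1 + ρ) / (1 - ρ)) < 2*r := by linarith
  have hXE : (1 + ρ) / (1 - ρ) < E := by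
    rw [hE, ← Real.exp_log hXpos]; exact Real.exp_lt_exp.mpr hlogX
  have hτ : ρ * (E + 1) ≤ E - 1 := by
    rw [div_lt_iff₀ (by linarith : (0:ℝ) < 1 - ρ)] at hXE
    nlinarith
  -- triangle: B ≤ (1 - A^2) + A * d
  have htri : B ≤ (1 - A^2) + A * d := by
    have h1 : (1 : ℂ) - (starRingEnd ℂ) z * w
        = (1 - (starRingEnd ℂ) z * z) + (starRingEnd ℂ) z * (z - w) := by ring
    have h2 : ‖((1:ℂ) - (starRingEnd ℂ) z * z)‖ = 1 - A^2 := by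
      rw [Complex.conj_mul']
      have hnorm : ‖z‖ = A := hA.symm
      rw [show (1:ℂ) - (↑‖z‖)^2 = ((1 - ‖z‖^2 : ℝ) : ℂ) by push_cast; ring]
      rw [Complex.norm_real, Real.norm_eq_abs, hnorm, _root_.abs_of_nonneg (by nlinarith : (0:ℝ) ≤ 1 - A^2)]
    have h3 : ‖((starRingEnd ℂ) z * (z - w))‖ = A * d := by
      rw [norm_mul, Complex.norm_conj, ← hA, ← hd]
    calc B = ‖((1 - (starRingEnd ℂ) z * z) + (starRingEnd ℂ) z * (z - w))‖ := by
            rw [hB, h1]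
      _ ≤ ‖(1 - (starRingEnd ℂ) z * z)‖ + ‖((starRingEnd ℂ) z * (z - w))‖ :=
            norm_add_le _ _
      _ = (1 - A^2) + A * d := by rw [h2, h3]
  -- d = ρ B
  have hdρB : d = ρ * B := by rw [hrho]; field_simp
  -- conclude
  rw [Metric.mem_closedBall, Complex.dist_eq, show w - z = -(z-w) by ring, norm_neg,
    ← hd]
  -- d ≤ (E-1)(1-A)
  have key : d * (E + 1) ≤ (E - 1) * (1 - A^2) + d * A * (E - 1) := by
    have h1 : d * (E+1) = ρ * (E+1) * B := by rw [hdρB]; ring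
    have h2 : ρ*(E+1)*B ≤ (E-1)*B := mul_le_mul_of_nonneg_right hτ hB0
    have h3 : (E-1)*B ≤ (E-1)*((1-A^2) + A*d) :=
      mul_le_mul_of_nonneg_left htri (by linarith)
    nlinarith [h1, h2, h3]
  have hnn : 0 ≤ d * E * (1 - A) :=
    mul_nonneg (mul_nonneg hd0 (by linarith)) (by linarith)
  have h5 : d * (1 + A) ≤ ((E - 1) * (1 - A)) * (1 + A) := by
    have heq : d*(1+A) = d*(E+1) - d*A*(E-1) - d*E*(1-A) := by ring
    have h6 : ((E-1)*(1-A))*(1+A) = (E-1)*(1-A^2) := by ring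
    rw [heq, h6]
    linarith [key, hnn]
  exact le_of_mul_le_mul_right h5 (by linarith : (0:ℝ) < 1 + A)

lemma real_key (s t C x y : ℝ) (hs0 : 0 < s) (hC : 0 < C) (ht : 0 < t)
    (htC : (1+C)*t ≤ s/2)
    (h1 : x^2 + y^2 < 1) (h2 : s^2 ≤ (x - (1-s))^2 + y^2)
    (h3 : (x - (1-t))^2 + y^2 ≤ C^2 * t^2) :
    (1 - s + Real.sqrt (s^2 - C^2*t^2) ≤ x ∧ x ≤ 1) ∧ (-(C*t) ≤ y ∧ y ≤ C*t) := by
  have hCt : 0 < C * t := mul_pos hC ht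
  have hCts : C * t ≤ s/2 := by nlinarith
  have hy2 : y^2 ≤ C^2*t^2 := by nlinarith [sq_nonneg (x - (1-t))]
  have hyu : y ≤ C*t := by nlinarith [sq_nonneg (y - C*t)]
  have hyl : -(C*t) ≤ y := by nlinarith [sq_nonneg (y + C*t)]
  have hxu : x ≤ 1 := by nlinarith [sq_nonneg y, sq_nonneg (x-1), sq_nonneg (x+1)]
  have hxl : 1 - t - C*t ≤ x := by nlinarith [sq_nonneg (x - (1-t) + C*t)]
  set Q := Real.sqrt (s^2 - C^2*t^2) with hQ
  have hQ0 : 0 ≤ Q := Real.sqrt_nonneg _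
  have hQsq : Q^2 = s^2 - C^2*t^2 := by rw [hQ]; exact Real.sq_sqrt (by nlinarith)
  clear_value Q
  have hb : 0 < x - (1-s) + Q := by nlinarith
  have hprod : 0 ≤ (x - (1-s) - Q) * (x - (1-s) + Q) := by nlinarith
  have : 0 ≤ x - (1-s) - Q := by
    by_contra h
    push_neg at h
    linarith [mul_neg_of_neg_of_pos h hb, hprod]
  exact ⟨⟨by linarith, hxu⟩, hyl, hyu⟩

lemma sub_sqrt_le (s a : ℝ) (hs : 0 < s) (ha : 0 ≤ a) (has : a ≤ s) :
    s - Real.sqrt (s^2 - a^2) ≤ a^2 / s := by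
  have h0 : 0 ≤ s^2 - a^2 := by nlinarith
  have hQ0 : 0 ≤ Real.sqrt (s^2 - a^2) := Real.sqrt_nonneg _
  have hQsq : (Real.sqrt (s^2 - a^2))^2 = s^2 - a^2 := Real.sq_sqrt h0
  set Q := Real.sqrt (s^2 - a^2) with hQ
  have hQ0' : 0 ≤ Q := Real.sqrt_nonneg _
  have hQsq' : Q^2 = s^2 - a^2 := by rw [hQ]; exact Real.sq_sqrt h0
  clear_value Q
  have hQs : Q ≤ s := by nlinarith
  rw [le_div_iff₀ hs]
  nlinarith [mul_le_mul_of_nonneg_right hQs hQ0']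

lemma rot_volume (ζ : ℂ) (hζ : ‖ζ‖ = 1) (S : Set ℂ) (hS : MeasurableSet S) :
    volume ((fun w : ℂ => (starRingEnd ℂ) ζ * w) ⁻¹' S) = volume S := by
  have hmem : (starRingEnd ℂ) ζ ∈ Metric.sphere (0:ℂ) 1 := by
    rw [mem_sphere_zero_iff_norm, RCLike.norm_conj, hζ]
  set c : Circle := ⟨(starRingEnd ℂ) ζ, hmem⟩ with hc
  have hfun : (fun w : ℂ => (starRingEnd ℂ) ζ * w) = ⇑(rotation c) := by
    ext w; rw [rotation_apply]
  rw [hfun, (rotation c).measurePreserving.measure_preimage hS.nullMeasurableSet]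

lemma volume_rect (a b c d : ℝ) :
    volume {w : ℂ | w.re ∈ Set.Icc a b ∧ w.im ∈ Set.Icc c d}
      = ENNReal.ofReal (b - a) * ENNReal.ofReal (d - c) := by
  have h : {w : ℂ | w.re ∈ Set.Icc a b ∧ w.im ∈ Set.Icc c d}
      = Complex.measurableEquivRealProd ⁻¹' (Set.Icc a b ×ˢ Set.Icc c d) := by
    ext w
    simp [Complex.measurableEquivRealProd, Complex.equivRealProd, Set.mem_prod]
    tauto
  rw [h, Complex.volume_preserving_equiv_real_prod.measure_preimage
    ((measurableSet_Icc.prod measurableSet_Icc).nullMeasurableSet)]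
  rw [MeasureTheory.Measure.volume_eq_prod, MeasureTheory.Measure.prod_prod,
    Real.volume_Icc, Real.volume_Icc]

lemma measurableSet_rect (a b c d : ℝ) :
    MeasurableSet {w : ℂ | w.re ∈ Set.Icc a b ∧ w.im ∈ Set.Icc c d} := by
  exact (measurable_re measurableSet_Icc).inter (measurable_im measurableSet_Icc)

set_option maxHeartbeats 1000000 in
lemma omega_inter_bound (ζ : ℂ) (hζ : ‖ζ‖ = 1) (s C t : ℝ)
    (hs0 : 0 < s) (hs1 : s < 1) (hC : 0 < C) (ht : 0 < t) (htC : (1+C)*t ≤ s/2) :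
    volume ((UD \ closure (Metric.ball (((1 - s : ℝ) : ℂ) * ζ) s))
        ∩ Metric.closedBall (((1 - t : ℝ) : ℂ) * ζ) (C*t))
      ≤ ENNReal.ofReal (C^2*t^2/s) * ENNReal.ofReal (2*(C*t)) := by
  set L := 1 - s + Real.sqrt (s^2 - C^2*t^2) with hL
  clear_value L
  set R := {w : ℂ | w.re ∈ Set.Icc L 1 ∧ w.im ∈ Set.Icc (-(C*t)) (C*t)} with hR
  have hζζ : (starRingEnd ℂ) ζ * ζ = 1 := by
    rw [Complex.conj_mul', hζ]
    norm_num
  have hsub : (UD \ closure (Metric.ball (((1 - s : ℝ) : ℂ) * ζ) s))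
        ∩ Metric.closedBall (((1 - t : ℝ) : ℂ) * ζ) (C*t)
      ⊆ (fun w : ℂ => (starRingEnd ℂ) ζ * w) ⁻¹' R := by
    rintro w ⟨⟨hw1, hw2⟩, hw3⟩
    rw [closure_ball _ hs0.ne'] at hw2
    have hw1' : ‖w‖ < 1 := by
      simpa [UD, Metric.mem_ball, Complex.dist_eq] using hw1
    have hw2' : s ≤ ‖(w - ((1 - s : ℝ) : ℂ) * ζ)‖ := by
      rw [Metric.mem_closedBall, Complex.dist_eq] at hw2
      push_neg at hw2
      exact hw2.le
    have hw3' : ‖(w - ((1 - t : ℝ) : ℂ) * ζ)‖ ≤ C*t := by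
      rwa [Metric.mem_closedBall, Complex.dist_eq] at hw3
    set v := (starRingEnd ℂ) ζ * w with hv
    set x := v.re with hx
    set y := v.im with hy
    -- |v| = |w|
    have habsv : ‖v‖ = ‖w‖ := by
      rw [hv, norm_mul, Complex.norm_conj, hζ, one_mul]
    have hsq : x^2 + y^2 = ‖v‖ ^ 2 := by
      rw [Complex.sq_norm, Complex.normSq_apply, hx, hy]; ring
    have h1 : x^2 + y^2 < 1 := by
      rw [hsq, habsv]
      nlinarith [norm_nonneg w]
    -- shifted by (1-s)
    have hshift : ∀ a : ℝ, (starRingEnd ℂ) ζ * (w - (a : ℂ) * ζ) = v - (a : ℂ) := by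
      intro a
      rw [hv]
      linear_combination (-(a : ℂ)) * hζζ
    have habs_shift : ∀ a : ℝ, (x - a)^2 + y^2 = ‖(w - (a:ℂ)*ζ)‖ ^ 2 := by
      intro a
      have e1 : ‖(w - (a:ℂ)*ζ)‖ = ‖(v - (a:ℂ))‖ := by
        rw [← hshift a, norm_mul, Complex.norm_conj, hζ, one_mul]
      rw [e1, Complex.sq_norm, Complex.normSq_apply, Complex.sub_re, Complex.sub_im,
        Complex.ofReal_re, Complex.ofReal_im, hx, hy]
      ring
    have h2 : s^2 ≤ (x - (1-s))^2 + y^2 := by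
      rw [habs_shift (1-s)]
      nlinarith [hw2', norm_nonneg (w - ((1-s:ℝ):ℂ)*ζ)]
    have h3 : (x - (1-t))^2 + y^2 ≤ C^2*t^2 := by
      rw [habs_shift (1-t)]
      nlinarith [hw3', norm_nonneg (w - ((1-t:ℝ):ℂ)*ζ), mul_pos hC ht]
    have hk := real_key s t C x y hs0 hC ht htC h1 h2 h3
    have hmem : v ∈ R := by
      rw [hR]
      exact ⟨⟨hL ▸ hk.1.1, hk.1.2⟩, hk.2.1, hk.2.2⟩
    show (starRingEnd ℂ) ζ * w ∈ R
    rw [← hv]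
    exact hmem
  calc volume ((UD \ closure (Metric.ball (((1 - s : ℝ) : ℂ) * ζ) s))
        ∩ Metric.closedBall (((1 - t : ℝ) : ℂ) * ζ) (C*t))
      ≤ volume ((fun w : ℂ => (starRingEnd ℂ) ζ * w) ⁻¹' R) := measure_mono hsub
    _ = volume R := rot_volume ζ hζ R (measurableSet_rect _ _ _ _)
    _ = ENNReal.ofReal (1 - L) * ENNReal.ofReal (C*t - -(C*t)) := volume_rect _ _ _ _
    _ ≤ ENNReal.ofReal (C^2*t^2/s) * ENNReal.ofReal (2*(C*t)) := by
        have hCt : 0 < C*t := mul_pos hC ht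
        have hCts : C*t ≤ s := by nlinarith
        have h1L : 1 - L ≤ C^2*t^2/s := by
          have h' : s - Real.sqrt (s^2 - C^2*t^2) ≤ C^2*t^2/s := by
            rw [show s^2 - C^2*t^2 = s^2 - (C*t)^2 by ring,
              show C^2*t^2/s = (C*t)^2/s by ring_nf]
            exact sub_sqrt_le s (C*t) hs0 hCt.le hCts
          rw [hL]
          linarith [h']
        exact mul_le_mul' (ENNReal.ofReal_le_ofReal h1L)
          (ENNReal.ofReal_le_ofReal (by linarith))

lemma bergman_subset_UD (z : ℂ) (r : ℝ) : bergmanBall z r ⊆ UD := fun _ hw => hw.1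

lemma volume_UD_ne_top : volume UD ≠ ⊤ := by
  rw [UD, Complex.volume_ball]
  exact ENNReal.mul_ne_top (by simp) ENNReal.coe_ne_top


/-- for a univalent φ whose image is Ω = 𝔻 ∖ closure(𝔻_ζ), with 𝔻_ζ a disc
internally tangent to 𝕋 at ζ, the area condition fails; in particular the ratio
A(Ω ∩ D(z,r))/A(D(z,r)) → 0 as z = (1−t)ζ → ζ radially. -/
theorem stmt18 (ζ : ℂ) (hζ : ‖ζ‖ = 1) (s : ℝ) (hs0 : 0 < s) (hs1 : s < 1)
    (Ω : Set ℂ) (hΩ : Ω = UD \ closure (Metric.ball (((1 - s : ℝ) : ℂ) * ζ) s))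
    (φ : ℂ → ℂ) (hφ : DifferentiableOn ℂ φ UD) (hinj : Set.InjOn φ UD)
    (him : φ '' UD = Ω) :
    (¬ ∃ δ r : ℝ, 0 < δ ∧ 0 < r ∧ ∀ z ∈ UD,
        ENNReal.ofReal δ * volume (bergmanBall z r) ≤ volume (φ '' UD ∩ bergmanBall z r)) ∧
    (∀ r : ℝ, 0 < r →
      Tendsto (fun t : ℝ =>
          (volume (Ω ∩ bergmanBall (((1 - t : ℝ) : ℂ) * ζ) r)).toReal /
          (volume (bergmanBall (((1 - t : ℝ) : ℂ) * ζ) r)).toReal)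
        (nhdsWithin 0 (Set.Ioi 0)) (nhds 0)) := by
  subst hΩ
  rw [him]
  -- basic facts valid for all 0 < t < 1 and 0 < r
  have habs : ∀ t : ℝ, 0 < t → t < 1 → ‖(((1 - t : ℝ) : ℂ) * ζ)‖ = 1 - t := by
    intro t ht0 ht1
    rw [norm_mul, Complex.norm_real, Real.norm_eq_abs, hζ, mul_one, _root_.abs_of_nonneg (by linarith)]
  have hmemUD : ∀ t : ℝ, 0 < t → t < 1 → (((1 - t : ℝ) : ℂ) * ζ) ∈ UD := by
    intro t ht0 ht1
    rw [UD, Metric.mem_ball, Complex.dist_eq, sub_zero, habs t ht0 ht1]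
    linarith
  -- volume facts
  have hDfin : ∀ (z : ℂ) (r : ℝ), volume (bergmanBall z r) ≠ ⊤ :=
    fun z r => ne_top_of_le_ne_top volume_UD_ne_top (measure_mono (bergman_subset_UD z r))
  have hNfin : ∀ (z : ℂ) (r : ℝ),
      volume ((UD \ closure (Metric.ball (((1 - s : ℝ) : ℂ) * ζ) s)) ∩ bergmanBall z r) ≠ ⊤ :=
    fun z r => ne_top_of_le_ne_top (hDfin z r) (measure_mono inter_subset_right)
  have hDlow : ∀ (r t : ℝ), 0 < r → 0 < t → t < 1 →
      ENNReal.ofReal (min (1/4) (r/4) * t) ^ 2 * (NNReal.pi : ℝ≥0∞)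
        ≤ volume (bergmanBall (((1 - t : ℝ) : ℂ) * ζ) r) := by
    intro r t hr ht0 ht1
    have h := ball_subset_bergman (((1 - t : ℝ) : ℂ) * ζ) r hr
      (by rw [habs t ht0 ht1]; linarith)
    rw [habs t ht0 ht1, show (1 : ℝ) - (1 - t) = t by ring] at h
    calc ENNReal.ofReal (min (1/4) (r/4) * t) ^ 2 * (NNReal.pi : ℝ≥0∞)
        = volume (Metric.ball (((1 - t : ℝ) : ℂ) * ζ) (min (1/4) (r/4) * t)) :=
          (Complex.volume_ball _ _).symm
      _ ≤ _ := measure_mono h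
  have hDpos : ∀ (r t : ℝ), 0 < r → 0 < t → t < 1 →
      0 < volume (bergmanBall (((1 - t : ℝ) : ℂ) * ζ) r) := by
    intro r t hr ht0 ht1
    refine lt_of_lt_of_le ?_ (hDlow r t hr ht0 ht1)
    have hc : 0 < min (1/4) (r/4) * t :=
      mul_pos (lt_min (by norm_num) (by linarith)) ht0
    have hpi : (NNReal.pi : ℝ≥0∞) ≠ 0 := by
      simp only [ne_eq, ENNReal.coe_eq_zero]
      intro hzero
      have : ((NNReal.pi : ℝ≥0) : ℝ) = 0 := by rw [hzero]; simp
      rw [NNReal.coe_real_pi] at this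
      exact Real.pi_ne_zero this
    exact ENNReal.mul_pos (pow_ne_zero 2 (ENNReal.ofReal_pos.mpr hc).ne') hpi
  -- Part 2
  have part2 : ∀ r : ℝ, 0 < r →
      Tendsto (fun t : ℝ =>
          (volume ((UD \ closure (Metric.ball (((1 - s : ℝ) : ℂ) * ζ) s))
            ∩ bergmanBall (((1 - t : ℝ) : ℂ) * ζ) r)).toReal /
          (volume (bergmanBall (((1 - t : ℝ) : ℂ) * ζ) r)).toReal)
        (nhdsWithin 0 (Set.Ioi 0)) (nhds 0) := by
    intro r hr
    set c := min (1/4) (r/4) with hcdef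
    have hc0 : 0 < c := lt_min (by norm_num) (by linarith)
    set C := Real.exp (2*r) - 1 with hCdef
    have hC0 : 0 < C := by
      have := Real.exp_lt_exp.mpr (show (0:ℝ) < 2*r by linarith)
      rw [Real.exp_zero] at this
      simp only [hCdef]
      linarith
    set K := 2*C^3/(s*c^2*Real.pi) with hKdef
    set t₀ := min 1 (s/(2*(1+C))) with ht₀def
    have ht₀0 : 0 < t₀ := lt_min one_pos (by positivity)
    apply squeeze_zero' (g := fun t => K * t)
    · exact Filter.Eventually.of_forall fun t =>
        div_nonneg ENNReal.toReal_nonneg ENNReal.toReal_nonneg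
    · filter_upwards [Ioo_mem_nhdsGT_of_mem (show (0:ℝ) ∈ Ico 0 t₀ from ⟨le_refl _, ht₀0⟩)]
        with t ht
      obtain ⟨ht0, htt₀⟩ := ht
      have ht1 : t < 1 := lt_of_lt_of_le htt₀ (min_le_left _ _)
      have htC : (1+C)*t ≤ s/2 := by
        have h2 : t ≤ s/(2*(1+C)) := le_of_lt (lt_of_lt_of_le htt₀ (min_le_right _ _))
        rw [le_div_iff₀ (by positivity)] at h2
        nlinarith
      -- numerator bound
      have hnum : volume ((UD \ closure (Metric.ball (((1 - s : ℝ) : ℂ) * ζ) s))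
            ∩ bergmanBall (((1 - t : ℝ) : ℂ) * ζ) r)
          ≤ ENNReal.ofReal (C^2*t^2/s * (2*(C*t))) := by
        have hsub : (UD \ closure (Metric.ball (((1 - s : ℝ) : ℂ) * ζ) s))
              ∩ bergmanBall (((1 - t : ℝ) : ℂ) * ζ) r
            ⊆ (UD \ closure (Metric.ball (((1 - s : ℝ) : ℂ) * ζ) s))
              ∩ Metric.closedBall (((1 - t : ℝ) : ℂ) * ζ) (C*t) := by
          apply inter_subset_inter_right
          have h := bergman_subset_closedBall (((1 - t : ℝ) : ℂ) * ζ) r hr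
            (by rw [habs t ht0 ht1]; linarith)
          rw [habs t ht0 ht1, show (1 : ℝ) - (1 - t) = t by ring, ← hCdef] at h
          exact h
        calc volume _ ≤ volume ((UD \ closure (Metric.ball (((1 - s : ℝ) : ℂ) * ζ) s))
              ∩ Metric.closedBall (((1 - t : ℝ) : ℂ) * ζ) (C*t)) := measure_mono hsub
          _ ≤ ENNReal.ofReal (C^2*t^2/s) * ENNReal.ofReal (2*(C*t)) :=
              omega_inter_bound ζ hζ s C t hs0 hs1 hC0 ht0 htC
          _ = ENNReal.ofReal (C^2*t^2/s * (2*(C*t))) :=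
              (ENNReal.ofReal_mul (by positivity)).symm
      -- real bounds
      have hNle : (volume ((UD \ closure (Metric.ball (((1 - s : ℝ) : ℂ) * ζ) s))
            ∩ bergmanBall (((1 - t : ℝ) : ℂ) * ζ) r)).toReal ≤ C^2*t^2/s * (2*(C*t)) :=
        ENNReal.toReal_le_of_le_ofReal (by positivity) hnum
      have hDge : (c*t)^2 * Real.pi ≤ (volume (bergmanBall (((1 - t : ℝ) : ℂ) * ζ) r)).toReal := by
        have h := hDlow r t hr ht0 ht1
        have hto := (ENNReal.toReal_le_toReal
          (ENNReal.mul_ne_top (ENNReal.pow_ne_top ENNReal.ofReal_ne_top) ENNReal.coe_ne_top)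
          (hDfin _ r)).2 h
        have heq : (ENNReal.ofReal (min (1/4) (r/4) * t) ^ 2 * (NNReal.pi : ℝ≥0∞)).toReal
            = (c*t)^2 * Real.pi := by
          rw [ENNReal.toReal_mul, ENNReal.toReal_pow,
            ENNReal.toReal_ofReal (by positivity), ENNReal.coe_toReal, NNReal.coe_real_pi,
            hcdef]
        rw [heq] at hto
        exact hto
      have hd0 : 0 < (c*t)^2 * Real.pi := by positivity
      have hfrac : (volume ((UD \ closure (Metric.ball (((1 - s : ℝ) : ℂ) * ζ) s))
            ∩ bergmanBall (((1 - t : ℝ) : ℂ) * ζ) r)).toReal /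
          (volume (bergmanBall (((1 - t : ℝ) : ℂ) * ζ) r)).toReal
          ≤ (C^2*t^2/s * (2*(C*t))) / ((c*t)^2 * Real.pi) :=
        div_le_div₀ (by positivity) hNle hd0 hDge
      refine le_trans hfrac (le_of_eq ?_)
      rw [hKdef]
      field_simp
    · have hcont : Tendsto (fun t : ℝ => K * t) (nhds 0) (nhds 0) := by
        have h := ((continuous_const (y := K)).mul continuous_id).tendsto (0:ℝ)
        convert h using 2 <;> simp
      exact hcont.mono_left nhdsWithin_le_nhds
  refine ⟨?_, part2⟩
  rintro ⟨δ, r, hδ, hr, H⟩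
  have h1 : ∀ᶠ t in nhdsWithin (0:ℝ) (Set.Ioi 0),
      (volume ((UD \ closure (Metric.ball (((1 - s : ℝ) : ℂ) * ζ) s))
        ∩ bergmanBall (((1 - t : ℝ) : ℂ) * ζ) r)).toReal /
      (volume (bergmanBall (((1 - t : ℝ) : ℂ) * ζ) r)).toReal < δ :=
    (part2 r hr).eventually (gt_mem_nhds hδ)
  have h2 : ∀ᶠ t in nhdsWithin (0:ℝ) (Set.Ioi 0),
      δ ≤ (volume ((UD \ closure (Metric.ball (((1 - s : ℝ) : ℂ) * ζ) s))
        ∩ bergmanBall (((1 - t : ℝ) : ℂ) * ζ) r)).toReal /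
      (volume (bergmanBall (((1 - t : ℝ) : ℂ) * ζ) r)).toReal := by
    filter_upwards [Ioo_mem_nhdsGT_of_mem (show (0:ℝ) ∈ Ico 0 1 from ⟨le_refl _, one_pos⟩)]
      with t ht
    obtain ⟨ht0, ht1⟩ := ht
    have hz := hmemUD t ht0 ht1
    have hH := H _ hz
    have hDpos' := hDpos r t hr ht0 ht1
    have hDtop := hDfin (((1 - t : ℝ) : ℂ) * ζ) r
    have hNtop := hNfin (((1 - t : ℝ) : ℂ) * ζ) r
    have hDr : 0 < (volume (bergmanBall (((1 - t : ℝ) : ℂ) * ζ) r)).toReal :=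
      ENNReal.toReal_pos hDpos'.ne' hDtop
    rw [le_div_iff₀ hDr]
    have := (ENNReal.toReal_le_toReal (by
        exact ENNReal.mul_ne_top ENNReal.ofReal_ne_top hDtop) hNtop).2 hH
    rw [ENNReal.toReal_mul, ENNReal.toReal_ofReal hδ.le] at this
    exact this
  obtain ⟨t, hlt, hge⟩ := (h1.and h2).exists
  linarith
end
end
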